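/- arXiv:1905.00920 — 11 statements merged into one kernel-verified Lean document; each statement's English description precedes it below -/
import Mathlib

section
/- Let K be a coherent product on a nonempty set Z, and define the distance d(z,z') := Real.sqrt (Re (K z z) + Re (K z' z') - 2 * Re (K z z')). Then for all z, z' ∈ Z the radicand Re (K z z) + Re (K z' z') - 2 * Re (K z z') is nonnegative (so d(z,z') is a well-defined nonnegative real number), and d satisfies the triangle inequality: d(x,z) ≤ d(x,y) + d(y,z) for all x, y, z ∈ Z. -/
open scoped ComplexConjugate

noncomputable section

/-- A coherent product on `Z`: Hermitian and all finite Gram matrices positive semidefinite. -/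
def IsCoherentProduct {Z : Type*} (K : Z → Z → ℂ) : Prop :=
  (∀ z z' : Z, conj (K z z') = K z' z) ∧
  ∀ (n : ℕ) (z : Fin n → Z) (c : Fin n → ℂ),
    ∃ r : ℝ, 0 ≤ r ∧ (∑ j, ∑ k, conj (c j) * K (z j) (z k) * c k) = (r : ℂ)

/-- The distance associated to a coherent product. -/
def cohDist {Z : Type*} (K : Z → Z → ℂ) (z z' : Z) : ℝ :=
  Real.sqrt ((K z z).re + (K z' z').re - 2 * (K z z').re)

lemma real_coeff {Z : Type*} (K : Z → Z → ℂ) (hK : IsCoherentProduct K)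
    (n : ℕ) (z : Fin n → Z) (c : Fin n → ℝ) :
    0 ≤ ∑ j, ∑ k, c j * c k * (K (z j) (z k)).re := by
  obtain ⟨r, hr, heq⟩ := hK.2 n z (fun j => (c j : ℂ))
  have h := congrArg Complex.re heq
  simp only [Complex.re_sum, Complex.ofReal_re] at h
  have : ∀ j k, (conj ((c j : ℂ)) * K (z j) (z k) * (c k : ℂ)).re
      = c j * c k * (K (z j) (z k)).re := by
    intro j k
    rw [Complex.conj_ofReal, mul_comm _ ((c k : ℂ)), ← mul_assoc, ← Complex.ofReal_mul,
      Complex.re_ofReal_mul, mul_comm (c k) (c j)]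
  simp only [this] at h
  rw [h]; exact hr

/-- the radicand is nonnegative and the coherent distance satisfies
the triangle inequality. -/
theorem stmt_0 {Z : Type*} [Nonempty Z] (K : Z → Z → ℂ) (hK : IsCoherentProduct K) :
    (∀ z z' : Z, 0 ≤ (K z z).re + (K z' z').re - 2 * (K z z').re) ∧
    (∀ x y z : Z, cohDist K x z ≤ cohDist K x y + cohDist K y z) := by
  have herm : ∀ z z' : Z, (K z z').re = (K z' z).re := by
    intro z z'
    have := congrArg Complex.re (hK.1 z z')
    simpa using this
  have rad : ∀ z z' : Z, 0 ≤ (K z z).re + (K z' z').re - 2 * (K z z').re := by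
    intro z z'
    have h := real_coeff K hK 2 ![z, z'] ![1, -1]
    simp [Fin.sum_univ_two] at h
    nlinarith [herm z z']
  refine ⟨rad, ?_⟩
  intro x y z
  set A := (K x x).re
  set B := (K y y).re
  set C := (K z z).re
  set P := (K x y).re
  set Q := (K x z).re
  set R := (K y z).re
  have key : ∀ t : ℝ, 0 ≤ (B + C - 2*R) * t^2 + 2 * (-B + P - Q + R) * t + (A + B - 2*P) := by
    intro t
    have h := real_coeff K hK 3 ![x, y, z] ![1, t - 1, -t]
    simp [Fin.sum_univ_three] at h
    nlinarith [herm x y, herm x z, herm y z]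
  set a := A + B - 2*P with ha'
  set b := B + C - 2*R with hb'
  set m := -B + P - Q + R with hm'
  have ha : 0 ≤ a := rad x y
  have hb : 0 ≤ b := rad y z
  have hc : A + C - 2*Q = a + b + 2*m := by ring
  have hmle : m ≤ Real.sqrt a * Real.sqrt b := by
    rcases eq_or_lt_of_le hb with hb0 | hb0
    · -- b = 0 : show m ≤ 0
      have hm0 : m ≤ 0 := by
        by_contra hm
        push_neg at hm
        have := key (-(a + 1) / (2 * m))
        rw [← hb0] at this
        have h2m : (2 * m) ≠ 0 := by positivity
        field_simp at this
        nlinarith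
      exact hm0.trans (by positivity)
    · have h := key (-m / b)
      have hm2 : m ^ 2 ≤ a * b := by
        have hb0' : b ≠ 0 := ne_of_gt hb0
        have heq : b * (-m/b)^2 + 2*m*(-m/b) + a = a - m^2/b := by
          field_simp
          ring
        rw [heq, sub_nonneg, div_le_iff₀ hb0] at h
        linarith
      calc m ≤ |m| := le_abs_self m
        _ = Real.sqrt (m ^ 2) := (Real.sqrt_sq_eq_abs m).symm
        _ ≤ Real.sqrt (a * b) := Real.sqrt_le_sqrt hm2
        _ = Real.sqrt a * Real.sqrt b := Real.sqrt_mul ha b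
  have : cohDist K x z = Real.sqrt (a + b + 2*m) := by
    unfold cohDist; rw [← hc]
  rw [this]
  unfold cohDist
  rw [show (K x x).re + (K y y).re - 2 * (K x y).re = a by rfl,
    show (K y y).re + (K z z).re - 2 * (K y z).re = b by rfl]
  have h1 : a + b + 2*m ≤ (Real.sqrt a + Real.sqrt b)^2 := by
    have sa := Real.sq_sqrt ha
    have sb := Real.sq_sqrt hb
    nlinarith
  calc Real.sqrt (a + b + 2*m) ≤ Real.sqrt ((Real.sqrt a + Real.sqrt b)^2) :=
        Real.sqrt_le_sqrt h1
    _ = Real.sqrt a + Real.sqrt b := by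
        rw [Real.sqrt_sq (by positivity)]
end
end

section
/- Let K be a coherent product on a nonempty set Z, and define the distance d(z,z') := Real.sqrt (Re (K z z) + Re (K z' z') - 2 * Re (K z z')). Then for all z, z' ∈ Z one has d(z,z') = 0 if and only if K w z = K w z' for all w ∈ Z. In particular, d is a metric on Z (i.e., d(z,z') = 0 implies z = z') if and only if the coherent space (Z,K) is nondegenerate. -/
open scoped ComplexConjugate

noncomputable section

/-- Auxiliary: the two-point Gram sum. -/
lemma gram2_aux {Z : Type*} (K : Z → Z → ℂ) (z z' : Z) :
    (∑ j, ∑ k, conj (![(1:ℂ), -1] j) * K (![z, z'] j) (![z, z'] k) * (![(1:ℂ), -1] k))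
      = K z z - K z z' - K z' z + K z' z' := by
  simp [Fin.sum_univ_two]
  ring

/-- Auxiliary: the three-point Gram sum with coefficients `(1, b, -b)`. -/
lemma gram3_aux {Z : Type*} (K : Z → Z → ℂ) (w z z' : Z) (b : ℂ) :
    (∑ j, ∑ k, conj (![(1:ℂ), b, -b] j) * K (![w, z, z'] j) (![w, z, z'] k)
        * (![(1:ℂ), b, -b] k))
      = K w w + b * (K w z - K w z') + conj b * (K z w - K z' w)
        + conj b * b * (K z z - K z z' - K z' z + K z' z') := by
  simp [Fin.sum_univ_three]
  ring

/-- `d(z,z') = 0` iff `K w z = K w z'` for all `w`; consequently `d` is a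
metric (distinct points have nonzero distance) iff the coherent space is nondegenerate. -/
theorem stmt_1 {Z : Type*} [Nonempty Z] (K : Z → Z → ℂ) (hK : IsCoherentProduct K) :
    (∀ z z' : Z, cohDist K z z' = 0 ↔ ∀ w : Z, K w z = K w z') ∧
    ((∀ z z' : Z, cohDist K z z' = 0 → z = z') ↔
      (∀ z z'' : Z, (∀ z' : Z, K z'' z' = K z z') → z'' = z)) := by
  obtain ⟨hherm, hpos⟩ := hK
  have hQ : ∀ z z' : Z, ∃ r : ℝ, 0 ≤ r ∧
      K z z - K z z' - K z' z + K z' z' = (r : ℂ) := by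
    intro z z'
    obtain ⟨r, hr0, hsum⟩ := hpos 2 ![z, z'] ![1, -1]
    exact ⟨r, hr0, by rw [← gram2_aux K z z', hsum]⟩
  have hre : ∀ z z' : Z, (K z' z).re = (K z z').re := by
    intro z z'
    rw [← hherm z z', Complex.conj_re]
  have hexpr : ∀ z z' : Z, ∃ r : ℝ, 0 ≤ r ∧
      (K z z).re + (K z' z').re - 2 * (K z z').re = r := by
    intro z z'
    obtain ⟨r, hr0, h⟩ := hQ z z'
    refine ⟨r, hr0, ?_⟩
    have := congrArg Complex.re h
    simp at this
    rw [hre z z'] at this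
    linarith
  have main : ∀ z z' : Z, cohDist K z z' = 0 ↔ ∀ w : Z, K w z = K w z' := by
    intro z z'
    constructor
    · intro h w
      obtain ⟨r, hr0, hr⟩ := hexpr z z'
      have hexpr0 : (K z z).re + (K z' z').re - 2 * (K z z').re = 0 :=
        Real.sqrt_eq_zero (by rw [hr]; exact hr0) |>.mp h
      obtain ⟨r', hr0', hQ'⟩ := hQ z z'
      have hr'0 : r' = 0 := by
        have := congrArg Complex.re hQ'
        simp at this
        rw [hre z z'] at this
        linarith
      have hQ0 : K z z - K z z' - K z' z + K z' z' = 0 := by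
        rw [hQ', hr'0]; simp
      set D : ℂ := K w z - K w z' with hD
      by_contra hne
      have hDne : D ≠ 0 := sub_ne_zero.mpr hne
      have hDpos : 0 < Complex.normSq D := Complex.normSq_pos.mpr hDne
      set t : ℝ := ((K w w).re + 1) / (2 * Complex.normSq D) with ht
      obtain ⟨s, hs0, hsum⟩ := hpos 3 ![w, z, z'] ![1, -(t : ℂ) * conj D, -(-(t : ℂ) * conj D)]
      rw [gram3_aux K w z z' (-(t : ℂ) * conj D)] at hsum
      have hconjD : K z w - K z' w = conj D := by
        rw [hD, map_sub, hherm w z, hherm w z']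
      have hsum2 : K w w - 2 * (t : ℂ) * Complex.normSq D = (s : ℂ) := by
        rw [hQ0, mul_zero, add_zero, ← hD, hconjD] at hsum
        have hcb : conj (-(t : ℂ) * conj D) = -(t : ℂ) * D := by
          rw [map_mul, map_neg, Complex.conj_ofReal, Complex.conj_conj]
        rw [hcb, mul_assoc, mul_assoc, Complex.mul_conj, mul_comm (conj D) D,
          Complex.mul_conj] at hsum
        linear_combination hsum
      have hsre : (K w w).re - 2 * t * Complex.normSq D = s := by
        have := congrArg Complex.re hsum2
        simpa using this
      have htv : 2 * t * Complex.normSq D = (K w w).re + 1 := by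
        rw [ht]
        field_simp
      rw [htv] at hsre
      linarith
    · intro h
      have h1 : K z z' = K z z := (h z).symm
      have h2 : K z z' = K z' z' := by
        rw [← hherm z' z, h z', hherm z' z']
      unfold cohDist
      have hzre : (K z' z').re = (K z z).re := by rw [← h2, h1]
      rw [hzre, h1, show (K z z).re + (K z z).re - 2 * (K z z).re = 0 by ring,
        Real.sqrt_zero]
  refine ⟨main, ?_, ?_⟩
  · intro hm z z'' hzz
    refine hm z'' z ((main z'' z).mpr fun w => ?_)
    calc K w z'' = conj (K z'' w) := (hherm z'' w).symm
      _ = conj (K z w) := congrArg conj (hzz w)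
      _ = K w z := hherm z w
  · intro hnd z z' hd
    have hw := (main z z').mp hd
    exact hnd z' z fun u => by
      rw [← hherm u z, hw u, hherm u z']
end
end

section
/- (Moore–Aronszajn Theorem, existence part.) Every coherent space has a quantum space: for every coherent product K on a nonempty set Z there exist a complex Hilbert space H and a map f : Z → H such that ⟪f z, f z'⟫ = K z z' for all z, z' ∈ Z and the ℂ-linear span of the range of f is dense in H. -/
open scoped ComplexConjugate

noncomputable section

namespace MooreAronszajn

variable {Z : Type u} (K : Z → Z → ℂ)

/-- The semi-inner product on the free module `Z →₀ ℂ` induced by `K`. -/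
def cohInner (f g : Z →₀ ℂ) : ℂ :=
  ∑ z ∈ f.support, ∑ z' ∈ g.support, conj (f z) * K z z' * g z'

theorem cohInner_eq (f g : Z →₀ ℂ) {s t : Finset Z} (hs : f.support ⊆ s)
    (ht : g.support ⊆ t) :
    cohInner K f g = ∑ z ∈ s, ∑ z' ∈ t, conj (f z) * K z z' * g z' := by
  unfold cohInner
  rw [Finset.sum_subset hs]
  · refine Finset.sum_congr rfl fun z _ => ?_
    refine Finset.sum_subset ht fun z' _ hz' => ?_
    rw [Finsupp.notMem_support_iff.mp hz', mul_zero]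
  · intro z _ hz
    rw [Finsupp.notMem_support_iff.mp hz]
    simp

theorem cohInner_add_left (f g h : Z →₀ ℂ) :
    cohInner K (f + g) h = cohInner K f h + cohInner K g h := by
  classical
  have hs : (f + g).support ⊆ f.support ∪ g.support := Finsupp.support_add
  rw [cohInner_eq K (f + g) h hs subset_rfl,
    cohInner_eq K f h Finset.subset_union_left subset_rfl,
    cohInner_eq K g h Finset.subset_union_right subset_rfl, ← Finset.sum_add_distrib]
  refine Finset.sum_congr rfl fun z _ => ?_
  rw [← Finset.sum_add_distrib]
  refine Finset.sum_congr rfl fun z' _ => ?_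
  simp only [Finsupp.add_apply, map_add]
  ring

theorem cohInner_smul_left (r : ℂ) (f g : Z →₀ ℂ) :
    cohInner K (r • f) g = conj r * cohInner K f g := by
  have hs : (r • f).support ⊆ f.support := Finsupp.support_smul
  rw [cohInner_eq K (r • f) g hs subset_rfl, cohInner, Finset.mul_sum]
  refine Finset.sum_congr rfl fun z _ => ?_
  rw [Finset.mul_sum]
  refine Finset.sum_congr rfl fun z' _ => ?_
  simp only [Finsupp.smul_apply, smul_eq_mul, map_mul]
  ring

theorem cohInner_conj_symm (hK : IsCoherentProduct K) (f g : Z →₀ ℂ) :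
    conj (cohInner K g f) = cohInner K f g := by
  unfold cohInner
  rw [map_sum, Finset.sum_comm]
  refine Finset.sum_congr rfl fun z _ => ?_
  rw [map_sum]
  refine Finset.sum_congr rfl fun z' _ => ?_
  simp only [map_mul, RingHomCompTriple.comp_apply, RingHom.id_apply, Complex.conj_conj]
  rw [← hK.1 z z']
  ring

theorem cohInner_self (hK : IsCoherentProduct K) (x : Z →₀ ℂ) :
    ∃ r : ℝ, 0 ≤ r ∧ cohInner K x x = (r : ℂ) := by
  classical
  set s := x.support
  set n := s.card with hn
  set e : ↥s ≃ Fin n := s.equivFin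
  obtain ⟨r, hr, hsum⟩ := hK.2 n (fun j => ((e.symm j : ↥s) : Z)) (fun j => x (e.symm j))
  refine ⟨r, hr, ?_⟩
  rw [← hsum]
  unfold cohInner
  rw [← Finset.sum_coe_sort s (fun z => ∑ z' ∈ s, conj (x z) * K z z' * x z')]
  rw [← Equiv.sum_comp e.symm (fun a : ↥s => ∑ z' ∈ s, conj (x (a : Z)) * K a z' * x z')]
  refine Finset.sum_congr rfl fun j _ => ?_
  rw [← Finset.sum_coe_sort s (fun z' => conj (x ((e.symm j : ↥s) : Z)) * K _ z' * x z')]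
  exact (Equiv.sum_comp e.symm fun b : ↥s =>
    conj (x ((e.symm j : ↥s) : Z)) * K ((e.symm j : ↥s) : Z) b * x b).symm

theorem cohInner_single (z z' : Z) :
    cohInner K (Finsupp.single z (1 : ℂ)) (Finsupp.single z' (1 : ℂ)) = K z z' := by
  classical
  rw [cohInner_eq K _ _ (Finsupp.support_single_subset) (Finsupp.support_single_subset)]
  simp

/-- The pre-inner-product-space core on `Z →₀ ℂ`. -/
def core (hK : IsCoherentProduct K) : PreInnerProductSpace.Core ℂ (Z →₀ ℂ) where
  inner := cohInner K
  conj_inner_symm := cohInner_conj_symm K hK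
  re_inner_nonneg := fun x => by
    obtain ⟨r, hr, hx⟩ := cohInner_self K hK x
    show 0 ≤ (cohInner K x x).re
    rw [hx]
    simpa using hr
  add_left := cohInner_add_left K
  smul_left := fun f g r => cohInner_smul_left K r f g

end MooreAronszajn

/-- Moore–Aronszajn, existence: every coherent space has a quantum space. -/
theorem stmt_3 {Z : Type u} [Nonempty Z] (K : Z → Z → ℂ) (hK : IsCoherentProduct K) :
    ∃ (H : Type u) (_ : NormedAddCommGroup H) (_ : InnerProductSpace ℂ H)
      (_ : CompleteSpace H) (f : Z → H),
      (∀ z z' : Z, (inner ℂ (f z) (f z') : ℂ) = K z z') ∧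
      Dense (Submodule.span ℂ (Set.range f) : Set H) := by
  classical
  letI c : PreInnerProductSpace.Core ℂ (Z →₀ ℂ) := MooreAronszajn.core K hK
  letI : SeminormedAddCommGroup (Z →₀ ℂ) := InnerProductSpace.Core.toSeminormedAddCommGroup (𝕜 := ℂ)
  letI : NormedSpace ℂ (Z →₀ ℂ) := InnerProductSpace.Core.toNormedSpace (𝕜 := ℂ)
  letI : InnerProductSpace ℂ (Z →₀ ℂ) :=
    { toNormedSpace := inferInstance
      toInner := c.toInner
      norm_sq_eq_re_inner := fun x => by
        have h : ‖x‖ = Real.sqrt (RCLike.re (c.inner x x)) := rfl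
        rw [h, Real.sq_sqrt (c.re_inner_nonneg x)]
      conj_inner_symm := c.conj_inner_symm
      add_left := c.add_left
      smul_left := c.smul_left }
  refine ⟨UniformSpace.Completion (Z →₀ ℂ), inferInstance, inferInstance, inferInstance,
    fun z => ((Finsupp.single z (1 : ℂ) : Z →₀ ℂ) : UniformSpace.Completion (Z →₀ ℂ)), ?_, ?_⟩
  · intro z z'
    rw [UniformSpace.Completion.inner_coe]
    exact MooreAronszajn.cohInner_single K z z'
  · have hrange : Set.range
        (fun z => ((Finsupp.single z (1 : ℂ) : Z →₀ ℂ) : UniformSpace.Completion (Z →₀ ℂ)))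
        = (UniformSpace.Completion.toComplL (𝕜 := ℂ)) ''
          Set.range (fun z : Z => Finsupp.single z (1 : ℂ)) := by
      rw [← Set.range_comp]
      rfl
    rw [hrange, ← ContinuousLinearMap.coe_coe, Submodule.span_image]
    have hspan : Submodule.span ℂ (Set.range (fun z : Z => Finsupp.single z (1 : ℂ))) = ⊤ := by
      have := (Finsupp.basisSingleOne (R := ℂ) (ι := Z)).span_eq
      rwa [Finsupp.coe_basisSingleOne] at this
    rw [hspan, Submodule.map_top]
    have : (LinearMap.range (UniformSpace.Completion.toComplL (𝕜 := ℂ)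
        (E := Z →₀ ℂ)).toLinearMap : Set (UniformSpace.Completion (Z →₀ ℂ)))
        = Set.range ((↑) : (Z →₀ ℂ) → UniformSpace.Completion (Z →₀ ℂ)) := by
      ext x
      constructor <;> rintro ⟨y, rfl⟩ <;> exact ⟨y, rfl⟩
    rw [this]
    exact UniformSpace.Completion.denseRange_coe
end
end

section
/- (Moore–Aronszajn Theorem, uniqueness part.) The quantum space of a coherent space is unique up to isometry: let K be a coherent product on a nonempty set Z, and let (H₁, f₁) and (H₂, f₂) be two quantum space realizations of (Z, K). Then there exists a ℂ-linear isometric equivalence U : H₁ ≃ H₂ such that U (f₁ z) = f₂ z for all z ∈ Z. -/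
open scoped ComplexConjugate

noncomputable section

lemma inner_lincomb {Z : Type*} (K : Z → Z → ℂ)
    {H : Type*} [NormedAddCommGroup H] [InnerProductSpace ℂ H]
    (f : Z → H) (hf : ∀ z z', (inner ℂ (f z) (f z') : ℂ) = K z z')
    (c d : Z →₀ ℂ) :
    (inner ℂ (Finsupp.linearCombination ℂ f c) (Finsupp.linearCombination ℂ f d) : ℂ)
      = ∑ j ∈ c.support, ∑ k ∈ d.support, conj (c j) * K j k * d k := by
  rw [Finsupp.linearCombination_apply, Finsupp.linearCombination_apply,
    Finsupp.sum, Finsupp.sum, sum_inner]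
  refine Finset.sum_congr rfl fun j _ => ?_
  rw [inner_sum]
  refine Finset.sum_congr rfl fun k _ => ?_
  rw [inner_smul_left, inner_smul_right, hf]
  ring

lemma exists_clm {Z : Type*} (K : Z → Z → ℂ)
    {H₁ : Type*} [NormedAddCommGroup H₁] [InnerProductSpace ℂ H₁] [CompleteSpace H₁]
    {H₂ : Type*} [NormedAddCommGroup H₂] [InnerProductSpace ℂ H₂] [CompleteSpace H₂]
    (f₁ : Z → H₁) (f₂ : Z → H₂)
    (hf₁ : ∀ z z', (inner ℂ (f₁ z) (f₁ z') : ℂ) = K z z')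
    (hf₂ : ∀ z z', (inner ℂ (f₂ z) (f₂ z') : ℂ) = K z z')
    (hd : Dense (Submodule.span ℂ (Set.range f₁) : Set H₁)) :
    ∃ T : H₁ →L[ℂ] H₂, (∀ x, ‖T x‖ = ‖x‖) ∧
      ∀ c : Z →₀ ℂ, T (Finsupp.linearCombination ℂ f₁ c) = Finsupp.linearCombination ℂ f₂ c := by
  set L₁ := Finsupp.linearCombination ℂ f₁ with hL₁
  set L₂ := Finsupp.linearCombination ℂ f₂ with hL₂
  have hnorm : ∀ c : Z →₀ ℂ, ‖L₂ c‖ = ‖L₁ c‖ := by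
    intro c
    rw [@norm_eq_sqrt_re_inner ℂ, @norm_eq_sqrt_re_inner ℂ,
      inner_lincomb K f₁ hf₁ c c, inner_lincomb K f₂ hf₂ c c]
  have hker : LinearMap.ker L₁ ≤ LinearMap.ker L₂ := by
    intro c hc
    rw [LinearMap.mem_ker] at hc ⊢
    rw [← norm_eq_zero, hnorm, hc, norm_zero]
  set ψ : LinearMap.range L₁ →ₗ[ℂ] H₂ :=
    (Submodule.liftQ (LinearMap.ker L₁) L₂ hker) ∘ₗ L₁.quotKerEquivRange.symm.toLinearMap
    with hψ
  have key : ∀ c : Z →₀ ℂ, ψ ⟨L₁ c, LinearMap.mem_range_self L₁ c⟩ = L₂ c := by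
    intro c
    have h1 : L₁.quotKerEquivRange (Submodule.Quotient.mk c)
        = ⟨L₁ c, LinearMap.mem_range_self L₁ c⟩ :=
      Subtype.ext (L₁.quotKerEquivRange_apply_mk c)
    rw [hψ, LinearMap.comp_apply, LinearEquiv.coe_toLinearMap, ← h1,
      LinearEquiv.symm_apply_apply, Submodule.liftQ_apply]
  have ψnorm : ∀ x : LinearMap.range L₁, ‖ψ x‖ = ‖x‖ := by
    rintro ⟨x, hx⟩
    obtain ⟨c, rfl⟩ := hx
    rw [key c]
    exact hnorm c
  set J : LinearMap.range L₁ →L[ℂ] H₂ :=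
    (LinearIsometry.mk ψ ψnorm).toContinuousLinearMap with hJ
  set incl : LinearMap.range L₁ →L[ℂ] H₁ := (LinearMap.range L₁).subtypeL with hincl
  have hrange : Set.range incl = (LinearMap.range L₁ : Set H₁) := Subtype.range_val
  have hdsub : Dense (LinearMap.range L₁ : Set H₁) := by
    rw [Finsupp.range_linearCombination]
    exact hd
  have hdense : DenseRange incl := by
    rw [DenseRange, hrange]; exact hdsub
  have h_ui : IsUniformInducing incl := isometry_subtype_coe.isUniformInducing
  set T : H₁ →L[ℂ] H₂ := J.extend incl with hT
  have hTincl : ∀ x : LinearMap.range L₁, T (incl x) = J x := fun x =>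
    ContinuousLinearMap.extend_eq J hdense h_ui x
  have hTlc : ∀ c : Z →₀ ℂ, T (L₁ c) = L₂ c := by
    intro c
    calc T (L₁ c) = T (incl ⟨L₁ c, LinearMap.mem_range_self L₁ c⟩) := rfl
      _ = J ⟨L₁ c, LinearMap.mem_range_self L₁ c⟩ := hTincl _
      _ = ψ ⟨L₁ c, LinearMap.mem_range_self L₁ c⟩ := rfl
      _ = L₂ c := key c
  refine ⟨T, ?_, hTlc⟩
  have hclosed : IsClosed {x : H₁ | ‖T x‖ = ‖x‖} :=
    isClosed_eq (T.continuous.norm) continuous_norm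
  have hsub : (LinearMap.range L₁ : Set H₁) ⊆ {x : H₁ | ‖T x‖ = ‖x‖} := by
    rintro x ⟨c, rfl⟩
    simp only [Set.mem_setOf_eq, hTlc c]
    exact hnorm c
  intro x
  have : closure (LinearMap.range L₁ : Set H₁) ⊆ {x : H₁ | ‖T x‖ = ‖x‖} :=
    hclosed.closure_subset_iff.mpr hsub
  exact this (hdsub.closure_eq ▸ Set.mem_univ x)

/-- A quantum space realization of `(Z, K)`: a complex Hilbert space `H` and a map
`f : Z → H` whose inner products realize `K` and whose range has dense span. -/
def IsQuantumSpace {Z : Type*} (K : Z → Z → ℂ) (H : Type*) [NormedAddCommGroup H]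
    [InnerProductSpace ℂ H] [CompleteSpace H] (f : Z → H) : Prop :=
  (∀ z z' : Z, (inner ℂ (f z) (f z') : ℂ) = K z z') ∧
  Dense (Submodule.span ℂ (Set.range f) : Set H)

/-- Moore–Aronszajn, uniqueness: the quantum space is unique up to
a linear isometric equivalence mapping coherent states to coherent states. -/
theorem stmt_4 {Z : Type*} [Nonempty Z] (K : Z → Z → ℂ) (hK : IsCoherentProduct K)
    {H₁ : Type*} [NormedAddCommGroup H₁] [InnerProductSpace ℂ H₁] [CompleteSpace H₁]
    {H₂ : Type*} [NormedAddCommGroup H₂] [InnerProductSpace ℂ H₂] [CompleteSpace H₂]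
    (f₁ : Z → H₁) (f₂ : Z → H₂)
    (h₁ : IsQuantumSpace K H₁ f₁) (h₂ : IsQuantumSpace K H₂ f₂) :
    ∃ U : H₁ ≃ₗᵢ[ℂ] H₂, ∀ z : Z, U (f₁ z) = f₂ z := by
  obtain ⟨T, Tnorm, Tlc⟩ := exists_clm K f₁ f₂ h₁.1 h₂.1 h₁.2
  obtain ⟨T', T'norm, T'lc⟩ := exists_clm K f₂ f₁ h₂.1 h₁.1 h₂.2
  have hd₁ : Dense (LinearMap.range (Finsupp.linearCombination ℂ f₁) : Set H₁) := by
    rw [Finsupp.range_linearCombination]; exact h₁.2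
  have hd₂ : Dense (LinearMap.range (Finsupp.linearCombination ℂ f₂) : Set H₂) := by
    rw [Finsupp.range_linearCombination]; exact h₂.2
  have left : ∀ x, T' (T x) = x := by
    have hclosed : IsClosed {x : H₁ | T' (T x) = x} :=
      isClosed_eq (T'.continuous.comp T.continuous) continuous_id
    have hsub : (LinearMap.range (Finsupp.linearCombination ℂ f₁) : Set H₁)
        ⊆ {x : H₁ | T' (T x) = x} := by
      rintro x ⟨c, rfl⟩
      simp only [Set.mem_setOf_eq, Tlc c, T'lc c]
    intro x
    exact hclosed.closure_subset_iff.mpr hsub (hd₁.closure_eq ▸ Set.mem_univ x)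
  have right : ∀ y, T (T' y) = y := by
    have hclosed : IsClosed {y : H₂ | T (T' y) = y} :=
      isClosed_eq (T.continuous.comp T'.continuous) continuous_id
    have hsub : (LinearMap.range (Finsupp.linearCombination ℂ f₂) : Set H₂)
        ⊆ {y : H₂ | T (T' y) = y} := by
      rintro y ⟨c, rfl⟩
      simp only [Set.mem_setOf_eq, T'lc c, Tlc c]
    intro y
    exact hclosed.closure_subset_iff.mpr hsub (hd₂.closure_eq ▸ Set.mem_univ y)
  let E : H₁ ≃ₗ[ℂ] H₂ :=
    { toFun := T
      map_add' := map_add T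
      map_smul' := map_smul T
      invFun := T'
      left_inv := left
      right_inv := right }
  refine ⟨⟨E, Tnorm⟩, ?_⟩
  intro z
  have h : f₁ z = Finsupp.linearCombination ℂ f₁ (Finsupp.single z 1) := by simp
  show T (f₁ z) = f₂ z
  rw [h, Tlc]
  simp
end
end

section
/- (Quantization Theorem.) Let K be a coherent product on a nonempty set Z, let (H, f) be a quantum space realization of (Z, K), and let A : Z → Z be a coherent map with adjoint B : Z → Z. Then there exists a unique ℂ-linear map Γ(A) from the ℂ-linear span of the range of f to H such that Γ(A) (f z) = f (A z) for all z ∈ Z. In particular, for every n, every c : Fin n → ℂ and every tuple z : Fin n → Z, if Σ_j c j • f (z j) = 0 then Σ_j c j • f (A (z j)) = 0. -/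
open scoped ComplexConjugate

noncomputable section

/-- The span of the coherent states. -/
def cohSpan {Z H : Type*} [NormedAddCommGroup H] [InnerProductSpace ℂ H]
    (f : Z → H) : Submodule ℂ H :=
  Submodule.span ℂ (Set.range f)

/-- The coherent state `f z`, seen as an element of the span of the coherent states. -/
def cohState {Z H : Type*} [NormedAddCommGroup H] [InnerProductSpace ℂ H]
    (f : Z → H) (z : Z) : cohSpan f :=
  ⟨f z, Submodule.subset_span (Set.mem_range_self z)⟩

/-- Quantization theorem: for a coherent map `A` with adjoint `B`, there
is a unique linear map `Γ(A)` on the span of the coherent states with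
`Γ(A) (f z) = f (A z)`; in particular vanishing linear combinations of coherent states
are mapped to vanishing linear combinations. -/
theorem stmt_6 {Z : Type*} [Nonempty Z] (K : Z → Z → ℂ) (hK : IsCoherentProduct K)
    {H : Type*} [NormedAddCommGroup H] [InnerProductSpace ℂ H] [CompleteSpace H]
    (f : Z → H) (hq : IsQuantumSpace K H f)
    (A B : Z → Z) (hAB : ∀ z z' : Z, K z (A z') = K (B z) z') :
    (∃! T : cohSpan f →ₗ[ℂ] H, ∀ z : Z, T (cohState f z) = f (A z)) ∧
    (∀ (n : ℕ) (c : Fin n → ℂ) (z : Fin n → Z),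
      ∑ j, c j • f (z j) = 0 → ∑ j, c j • f (A (z j)) = 0) := by
  obtain ⟨hinner, hdense⟩ := hq
  -- vectors orthogonal to all coherent states vanish
  have hzero : ∀ v : H, (∀ z : Z, (inner ℂ (f z) v : ℂ) = 0) → v = 0 := by
    intro v hv
    have hmem : v ∈ (Submodule.span ℂ (Set.range f))ᗮ := by
      rw [Submodule.mem_orthogonal]
      intro u hu
      induction hu using Submodule.span_induction with
      | mem x hx => obtain ⟨z, rfl⟩ := hx; exact hv z
      | zero => simp
      | add x y _ _ hx hy => simp [inner_add_left, hx, hy]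
      | smul c x _ hx => simp [inner_smul_left, hx]
    have : (Submodule.span ℂ (Set.range f))ᗮ = ⊥ := by
      rw [← Submodule.topologicalClosure_eq_top_iff]
      exact Submodule.dense_iff_topologicalClosure_eq_top.mp hdense
    simpa [this] using hmem
  -- the two linear combinations maps
  set L1 : (Z →₀ ℂ) →ₗ[ℂ] H := Finsupp.linearCombination ℂ f with hL1
  set L2 : (Z →₀ ℂ) →ₗ[ℂ] H := Finsupp.linearCombination ℂ (fun z => f (A z)) with hL2
  have hker : LinearMap.ker L1 ≤ LinearMap.ker L2 := by
    intro c hc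
    rw [LinearMap.mem_ker] at hc ⊢
    apply hzero
    intro w
    have h1 : (inner ℂ (f w) (L2 c) : ℂ) = inner ℂ (f (B w)) (L1 c) := by
      simp only [hL1, hL2, Finsupp.linearCombination_apply, Finsupp.sum, inner_sum,
        inner_smul_right, hinner, hAB]
    rw [h1, hc, inner_zero_right]
  have hrange : LinearMap.range L1 = cohSpan f := by
    rw [hL1, Finsupp.range_linearCombination]; rfl
  -- construct T
  let e : ((Z →₀ ℂ) ⧸ LinearMap.ker L1) ≃ₗ[ℂ] LinearMap.range L1 := L1.quotKerEquivRange
  let cast : cohSpan f ≃ₗ[ℂ] LinearMap.range L1 := LinearEquiv.ofEq _ _ hrange.symm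
  let T : cohSpan f →ₗ[ℂ] H :=
    ((LinearMap.ker L1).liftQ L2 hker) ∘ₗ (e.symm : LinearMap.range L1 →ₗ[ℂ] _) ∘ₗ
      (cast : cohSpan f →ₗ[ℂ] LinearMap.range L1)
  have hT : ∀ z : Z, T (cohState f z) = f (A z) := by
    intro z
    have h1 : cast (cohState f z) = e (Submodule.Quotient.mk (Finsupp.single z 1)) := by
      apply Subtype.ext
      simp [cast, e, cohState, LinearMap.quotKerEquivRange, hL1]
    show ((LinearMap.ker L1).liftQ L2 hker) (e.symm (cast (cohState f z))) = f (A z)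
    rw [h1, LinearEquiv.symm_apply_apply]
    simp [hL2]
  refine ⟨⟨T, hT, ?_⟩, ?_⟩
  · -- uniqueness
    intro T' hT'
    ext ⟨x, hx⟩
    induction hx using Submodule.span_induction with
    | mem x hx =>
      obtain ⟨z, rfl⟩ := hx
      exact (hT' z).trans (hT z).symm
    | zero =>
      have : (⟨0, Submodule.zero_mem _⟩ : cohSpan f) = 0 := rfl
      rw [this]; simp
    | add x y hxm hym hx hy =>
      have : (⟨x + y, Submodule.add_mem _ hxm hym⟩ : cohSpan f)
          = (⟨x, hxm⟩ : cohSpan f) + ⟨y, hym⟩ := rfl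
      rw [this, map_add, map_add, hx, hy]
    | smul c x hxm hx =>
      have : (⟨c • x, Submodule.smul_mem _ c hxm⟩ : cohSpan f)
          = c • (⟨x, hxm⟩ : cohSpan f) := rfl
      rw [this, map_smul, map_smul, hx]
  · -- vanishing combinations
    intro n c z hzv
    have h1 : (∑ j, c j • cohState f (z j) : cohSpan f) = 0 := by
      apply Subtype.ext
      push_cast [cohState]
      simpa [cohState] using hzv
    have h2 := congrArg T h1
    rw [map_sum, map_zero] at h2
    simp only [map_smul, hT] at h2
    exact h2
end
end

section
/- The quantization map is a representation of the semigroup of coherent maps: let K be a coherent product on a nonempty set Z, let (H, f) be a quantum space realization of (Z, K), let A₁ be coherent with adjoint B₁ and A₂ coherent with adjoint B₂, and let Γ(A₁), Γ(A₂), Γ(A₁ ∘ A₂) be the corresponding quantizations on the span S of the coherent states (which exist by the Quantization Theorem). Then Γ(A₂) maps S into S, and Γ(A₁ ∘ A₂) u = Γ(A₁) (Γ(A₂) u) for all u ∈ S; moreover the quantization of the identity map is the identity on S. -/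
open scoped ComplexConjugate

noncomputable section

/-- the quantization map is a representation of the semigroup of coherent
maps: `Γ(A₂)` maps the span `S` of the coherent states into itself,
`Γ(A₁ ∘ A₂) = Γ(A₁) ∘ Γ(A₂)` on `S`, and the quantization of the identity map
is the identity on `S`. -/
theorem stmt_8 {Z : Type*} [Nonempty Z] (K : Z → Z → ℂ) (hK : IsCoherentProduct K)
    {H : Type*} [NormedAddCommGroup H] [InnerProductSpace ℂ H] [CompleteSpace H]
    (f : Z → H) (hq : IsQuantumSpace K H f)
    (A₁ B₁ A₂ B₂ : Z → Z)
    (h₁ : ∀ z z' : Z, K z (A₁ z') = K (B₁ z) z')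
    (h₂ : ∀ z z' : Z, K z (A₂ z') = K (B₂ z) z')
    (T₁ T₂ T₁₂ Tid : cohSpan f →ₗ[ℂ] H)
    (hT₁ : ∀ z : Z, T₁ (cohState f z) = f (A₁ z))
    (hT₂ : ∀ z : Z, T₂ (cohState f z) = f (A₂ z))
    (hT₁₂ : ∀ z : Z, T₁₂ (cohState f z) = f (A₁ (A₂ z)))
    (hTid : ∀ z : Z, Tid (cohState f z) = f z) :
    (∃ hmem : ∀ u : cohSpan f, T₂ u ∈ cohSpan f,
      ∀ u : cohSpan f, T₁₂ u = T₁ ⟨T₂ u, hmem u⟩) ∧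
    (∀ u : cohSpan f, Tid u = (u : H)) := by
  classical
  have key : ∀ (S T' : cohSpan f →ₗ[ℂ] H),
      (∀ z : Z, S (cohState f z) = T' (cohState f z)) → ∀ u : cohSpan f, S u = T' u := by
    intro S T' h u
    obtain ⟨x, hx⟩ := u
    induction hx using Submodule.span_induction with
    | mem x hx =>
      obtain ⟨z, rfl⟩ := hx
      exact h z
    | zero =>
      have hz : (⟨0, (cohSpan f).zero_mem⟩ : cohSpan f) = 0 := rfl
      rw [hz, map_zero, map_zero]
    | add x y hx hy ihx ihy =>
      have : (⟨x + y, (cohSpan f).add_mem hx hy⟩ : cohSpan f)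
          = (⟨x, hx⟩ : cohSpan f) + ⟨y, hy⟩ := rfl
      rw [this, map_add, map_add, ihx, ihy]
    | smul a x hx ih =>
      have : (⟨a • x, (cohSpan f).smul_mem a hx⟩ : cohSpan f)
          = a • (⟨x, hx⟩ : cohSpan f) := rfl
      rw [this, map_smul, map_smul, ih]
  have hmem : ∀ u : cohSpan f, T₂ u ∈ cohSpan f := by
    intro u
    obtain ⟨x, hx⟩ := u
    induction hx using Submodule.span_induction with
    | mem x hx =>
      obtain ⟨z, rfl⟩ := hx
      have : (⟨f z, Submodule.subset_span ⟨z, rfl⟩⟩ : cohSpan f) = cohState f z := rfl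
      rw [this, hT₂]
      exact Submodule.subset_span ⟨A₂ z, rfl⟩
    | zero =>
      have hz : (⟨0, (cohSpan f).zero_mem⟩ : cohSpan f) = 0 := rfl
      rw [hz, map_zero]; exact (cohSpan f).zero_mem
    | add x y hx hy ihx ihy =>
      have : (⟨x + y, (cohSpan f).add_mem hx hy⟩ : cohSpan f)
          = (⟨x, hx⟩ : cohSpan f) + ⟨y, hy⟩ := rfl
      rw [this, map_add]; exact (cohSpan f).add_mem ihx ihy
    | smul a x hx ih =>
      have : (⟨a • x, (cohSpan f).smul_mem a hx⟩ : cohSpan f)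
          = a • (⟨x, hx⟩ : cohSpan f) := rfl
      rw [this, map_smul]; exact (cohSpan f).smul_mem a ih
  refine ⟨⟨hmem, ?_⟩, ?_⟩
  · have := key T₁₂ (T₁.comp (T₂.codRestrict (cohSpan f) hmem)) ?_
    · intro u; exact this u
    · intro z
      simp only [LinearMap.comp_apply, hT₁₂]
      have h1 : (T₂.codRestrict (cohSpan f) hmem) (cohState f z) = cohState f (A₂ z) := by
        apply Subtype.ext
        exact hT₂ z
      rw [h1, hT₁]
  · exact key Tid (cohSpan f).subtype (fun z => by rw [hTid]; rfl)
end
end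

section
/- The quantization of the adjoint is the adjoint of the quantization: let K be a coherent product on a nonempty set Z, let (H, f) be a quantum space realization of (Z, K), and let A : Z → Z be coherent with adjoint B : Z → Z; assume B is also coherent (with adjoint A). Let Γ(A) and Γ(B) be the quantizations on the span S of the coherent states. Then ⟪Γ(A) u, v⟫ = ⟪u, Γ(B) v⟫ for all u, v ∈ S. -/
open scoped ComplexConjugate

noncomputable section

/-- the quantization of the adjoint is the adjoint of the quantization:
`⟪Γ(A) u, v⟫ = ⟪u, Γ(B) v⟫` on the span of the coherent states. -/
theorem stmt_9 {Z : Type*} [Nonempty Z] (K : Z → Z → ℂ) (hK : IsCoherentProduct K)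
    {H : Type*} [NormedAddCommGroup H] [InnerProductSpace ℂ H] [CompleteSpace H]
    (f : Z → H) (hq : IsQuantumSpace K H f)
    (A B : Z → Z)
    (hAB : ∀ z z' : Z, K z (A z') = K (B z) z')
    (hBA : ∀ z z' : Z, K z (B z') = K (A z) z')
    (TA TB : cohSpan f →ₗ[ℂ] H)
    (hTA : ∀ z : Z, TA (cohState f z) = f (A z))
    (hTB : ∀ z : Z, TB (cohState f z) = f (B z)) :
    ∀ u v : cohSpan f, (inner ℂ (TA u) (v : H) : ℂ) = inner ℂ (u : H) (TB v) := by
  have hset : (Subtype.val ⁻¹' Set.range f : Set (cohSpan f)) = Set.range (cohState f) := by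
    ext x
    constructor
    · rintro ⟨z, hz⟩
      exact ⟨z, Subtype.ext hz⟩
    · rintro ⟨z, rfl⟩
      exact ⟨z, rfl⟩
  have htop : Submodule.span ℂ (Set.range (cohState f)) = (⊤ : Submodule ℂ (cohSpan f)) := by
    rw [← hset]
    exact Submodule.span_span_coe_preimage
  have base : ∀ z : Z, ∀ v : cohSpan f,
      (inner ℂ (f (A z)) (v : H) : ℂ) = inner ℂ (f z : H) (TB v) := by
    intro z v
    have hv : v ∈ Submodule.span ℂ (Set.range (cohState f)) := htop ▸ Submodule.mem_top
    induction hv using Submodule.span_induction with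
    | mem x hx =>
      obtain ⟨z', rfl⟩ := hx
      rw [hTB]
      show (inner ℂ (f (A z)) (f z') : ℂ) = inner ℂ (f z) (f (B z'))
      rw [hq.1, hq.1, hBA]
    | zero => simp
    | add x y hx hy ihx ihy => simp [inner_add_right, map_add, ihx, ihy]
    | smul c x hx ih => simp [inner_smul_right, map_smul, ih]
  intro u v
  have hu : u ∈ Submodule.span ℂ (Set.range (cohState f)) := htop ▸ Submodule.mem_top
  induction hu using Submodule.span_induction with
  | mem x hx =>
    obtain ⟨z, rfl⟩ := hx
    rw [hTA]
    exact base z v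
  | zero => simp
  | add x y hx hy ihx ihy => simp [inner_add_left, map_add, ihx, ihy]
  | smul c x hx ih => simp [inner_smul_left, map_smul, ih]
end
end

section
/- Quantizations of isometries are isometric: let K be a coherent product on a nonempty set Z, let (H, f) be a quantum space realization of (Z, K), and let A : Z → Z be coherent with adjoint B : Z → Z satisfying B (A z) = z for all z ∈ Z. Then the quantization Γ(A) is isometric on the span S of the coherent states: ‖Γ(A) u‖ = ‖u‖ for all u ∈ S, and more precisely ⟪Γ(A) u, Γ(A) v⟫ = ⟪u, v⟫ for all u, v ∈ S. Consequently Γ(A) extends to a linear isometry of H into itself. -/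
open scoped ComplexConjugate

noncomputable section

/-- quantizations of isometries are isometric on the span of the coherent
states, and extend to a linear isometry of `H` into itself. -/
theorem stmt_10 {Z : Type*} [Nonempty Z] (K : Z → Z → ℂ) (hK : IsCoherentProduct K)
    {H : Type*} [NormedAddCommGroup H] [InnerProductSpace ℂ H] [CompleteSpace H]
    (f : Z → H) (hq : IsQuantumSpace K H f)
    (A B : Z → Z)
    (hAB : ∀ z z' : Z, K z (A z') = K (B z) z')
    (hBA : ∀ z : Z, B (A z) = z)
    (T : cohSpan f →ₗ[ℂ] H)
    (hT : ∀ z : Z, T (cohState f z) = f (A z)) :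
    (∀ u v : cohSpan f, (inner ℂ (T u) (T v) : ℂ) = inner ℂ (u : H) (v : H)) ∧
    (∀ u : cohSpan f, ‖T u‖ = ‖(u : H)‖) ∧
    (∃ J : H →ₗᵢ[ℂ] H, ∀ u : cohSpan f, J (u : H) = T u) := by
  -- generators of the span
  have hspan : Submodule.span ℂ (((↑) : cohSpan f → H) ⁻¹' Set.range f) = ⊤ :=
    Submodule.span_span_coe_preimage
  -- inner product identity on generators
  have hgen : ∀ z z' : Z, (inner ℂ (f (A z)) (f (A z')) : ℂ) = inner ℂ (f z) (f z') := by
    intro z z'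
    rw [hq.1, hq.1, hAB (A z) z', hBA]
  -- step 1 : fixed coherent state on the left
  have step1 : ∀ (z : Z) (v : cohSpan f),
      (inner ℂ (f (A z)) (T v) : ℂ) = inner ℂ (f z) (v : H) := by
    intro z
    have h : ((innerSL ℂ (f (A z))).toLinearMap.comp T : cohSpan f →ₗ[ℂ] ℂ) =
        (innerSL ℂ (f z)).toLinearMap.comp (cohSpan f).subtype := by
      apply LinearMap.ext_on hspan
      rintro x ⟨z', hz'⟩
      have hTx : T x = f (A z') := by
        have hx : x = cohState f z' := Subtype.ext hz'.symm
        rw [hx]; exact hT z'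
      simp only [LinearMap.coe_comp, Function.comp_apply, ContinuousLinearMap.coe_coe,
        innerSL_apply_apply, Submodule.coe_subtype]
      rw [hTx, ← hz', hgen]
    intro v
    exact DFunLike.congr_fun h v
  -- full inner product identity
  have hinner : ∀ u v : cohSpan f, (inner ℂ (T u) (T v) : ℂ) = inner ℂ (u : H) (v : H) := by
    intro u v
    have h : ((innerSL ℂ (T v)).toLinearMap.comp T : cohSpan f →ₗ[ℂ] ℂ) =
        (innerSL ℂ (v : H)).toLinearMap.comp (cohSpan f).subtype := by
      apply LinearMap.ext_on hspan
      rintro x ⟨z, hz⟩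
      have hTx : T x = f (A z) := by
        have hx : x = cohState f z := Subtype.ext hz.symm
        rw [hx]; exact hT z
      simp only [LinearMap.coe_comp, Function.comp_apply, ContinuousLinearMap.coe_coe,
        innerSL_apply_apply, Submodule.coe_subtype]
      rw [hTx, ← inner_conj_symm, step1 z v, inner_conj_symm, hz]
    have h2 := DFunLike.congr_fun h u
    simp only [LinearMap.coe_comp, Function.comp_apply, ContinuousLinearMap.coe_coe,
      innerSL_apply_apply, Submodule.coe_subtype] at h2
    rw [← inner_conj_symm, h2, inner_conj_symm]
  -- norm identity
  have hnorm : ∀ u : cohSpan f, ‖T u‖ = ‖(u : H)‖ := by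
    intro u
    have h := hinner u u
    rw [inner_self_eq_norm_sq_to_K, inner_self_eq_norm_sq_to_K] at h
    have h' : ‖T u‖ ^ 2 = ‖(u : H)‖ ^ 2 := by exact_mod_cast h
    nlinarith [norm_nonneg (T u), norm_nonneg ((u : H))]
  refine ⟨hinner, hnorm, ?_⟩
  -- extension to all of H
  let Tc : cohSpan f →L[ℂ] H :=
    ⟨T, AddMonoidHomClass.continuous_of_bound T 1 (fun u => by rw [hnorm u]; simp)⟩
  have h_dense : DenseRange ((cohSpan f).subtypeL : cohSpan f →L[ℂ] H) := by
    show Dense (Set.range (Subtype.val : cohSpan f → H))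
    rw [Subtype.range_coe]; exact hq.2
  have h_e : IsUniformInducing ((cohSpan f).subtypeL : cohSpan f →L[ℂ] H) :=
    (isometry_subtype_coe).isUniformInducing
  let J' : H →L[ℂ] H := Tc.extend (cohSpan f).subtypeL
  have hJ' : ∀ u : cohSpan f, J' (u : H) = T u := fun u =>
    ContinuousLinearMap.extend_eq Tc h_dense h_e u
  have hJnorm : ∀ x : H, ‖J' x‖ = ‖x‖ := by
    intro x
    refine h_dense.induction_on x
      (isClosed_eq (continuous_norm.comp J'.continuous) continuous_norm) (fun u => ?_)
    simpa [hJ' u] using hnorm u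
  exact ⟨⟨J'.toLinearMap, hJnorm⟩, fun u => hJ' u⟩
end
end

section
/- The Klauder coherent product is a coherent product: let V be a complex inner product space with inner product ⟪·,·⟫ (conjugate-linear in the first argument). Then on the set Z = ℂ × V, the map K defined by K (z₀, z) (z₀', z') := Complex.exp (conj z₀ + z₀' + ⟪z, z'⟫) is a coherent product. -/
open scoped ComplexConjugate
open scoped Nat

noncomputable section

/-- Gram matrix powers give nonnegative quadratic forms. -/
lemma gram_pow_sum {V : Type*} [NormedAddCommGroup V] [InnerProductSpace ℂ V]
    {n : ℕ} (x : Fin n → V) (d : Fin n → ℂ) (m : ℕ) :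
    ∃ q : ℝ, 0 ≤ q ∧
      (∑ j, ∑ k, conj (d j) * d k * (inner ℂ (x j) (x k) : ℂ) ^ m) = (q : ℂ) := by
  set W := Submodule.span ℂ (Set.range x) with hW
  haveI : FiniteDimensional ℂ W := FiniteDimensional.span_of_finite ℂ (Set.finite_range x)
  set N := Module.finrank ℂ W with hN
  let b : OrthonormalBasis (Fin N) ℂ W := stdOrthonormalBasis ℂ W
  let x' : Fin n → W := fun j => ⟨x j, Submodule.subset_span (Set.mem_range_self j)⟩
  let f : Fin n → Fin N → ℂ := fun j l => inner ℂ (b l) (x' j)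
  have hinner : ∀ j k, (inner ℂ (x j) (x k) : ℂ) = ∑ l, conj (f j l) * f k l := by
    intro j k
    have h1 := b.sum_inner_mul_inner (x' j) (x' k)
    have h2 : (inner ℂ (x' j) (x' k) : ℂ) = inner ℂ (x j) (x k) := rfl
    rw [← h2, ← h1]
    refine Finset.sum_congr rfl fun l _ => ?_
    rw [← inner_conj_symm (x' j) (b l)]
  let g : Fin n → (Fin m → Fin N) → ℂ := fun j p => ∏ i, f j (p i)
  have hpow : ∀ j k, (inner ℂ (x j) (x k) : ℂ) ^ m
      = ∑ p : Fin m → Fin N, conj (g j p) * g k p := by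
    intro j k
    rw [hinner, ← Fin.prod_const m, Finset.prod_univ_sum, Fintype.piFinset_univ]
    refine Finset.sum_congr rfl fun p _ => ?_
    rw [Finset.prod_mul_distrib]
    congr 1
    rw [map_prod]
  have swap : ∀ (F : Fin n → Fin n → (Fin m → Fin N) → ℂ),
      ∑ j, ∑ k, ∑ p : Fin m → Fin N, F j k p
        = ∑ p : Fin m → Fin N, ∑ j, ∑ k, F j k p := by
    intro F
    have h1 : ∀ j : Fin n, ∑ k, ∑ p : Fin m → Fin N, F j k p
        = ∑ p : Fin m → Fin N, ∑ k, F j k p := fun j => Finset.sum_comm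
    simp_rw [h1]
    exact Finset.sum_comm
  refine ⟨∑ p : Fin m → Fin N, Complex.normSq (∑ j, d j * g j p),
    Finset.sum_nonneg fun p _ => Complex.normSq_nonneg _, ?_⟩
  have key : ∀ p : Fin m → Fin N,
      conj (∑ j, d j * g j p) * (∑ j, d j * g j p)
        = ∑ j, ∑ k, conj (d j) * d k * (conj (g j p) * g k p) := by
    intro p
    rw [map_sum, Finset.sum_mul_sum]
    refine Finset.sum_congr rfl fun j _ => Finset.sum_congr rfl fun k _ => ?_
    simp only [map_mul]
    ring
  have : (∑ j, ∑ k, conj (d j) * d k * (inner ℂ (x j) (x k) : ℂ) ^ m)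
      = ∑ p : Fin m → Fin N, conj (∑ j, d j * g j p) * (∑ j, d j * g j p) := by
    calc (∑ j, ∑ k, conj (d j) * d k * (inner ℂ (x j) (x k) : ℂ) ^ m)
        = ∑ j, ∑ k, ∑ p : Fin m → Fin N,
            conj (d j) * d k * (conj (g j p) * g k p) := by
          refine Finset.sum_congr rfl fun j _ => Finset.sum_congr rfl fun k _ => ?_
          rw [hpow, Finset.mul_sum]
      _ = ∑ p : Fin m → Fin N, ∑ j, ∑ k,
            conj (d j) * d k * (conj (g j p) * g k p) := swap _
      _ = ∑ p : Fin m → Fin N, conj (∑ j, d j * g j p) * (∑ j, d j * g j p) :=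
          Finset.sum_congr rfl fun p _ => (key p).symm
  rw [this, Complex.ofReal_sum]
  refine Finset.sum_congr rfl fun p _ => ?_
  rw [Complex.normSq_eq_conj_mul_self]

/-- the Klauder coherent product on `ℂ × V` is a coherent product. -/
theorem stmt_15 {V : Type*} [NormedAddCommGroup V] [InnerProductSpace ℂ V] :
    IsCoherentProduct (fun (z z' : ℂ × V) =>
      Complex.exp (conj z.1 + z'.1 + (inner ℂ z.2 z'.2 : ℂ))) := by
  constructor
  · intro z z'
    show conj (Complex.exp (conj z.1 + z'.1 + (inner ℂ z.2 z'.2 : ℂ)))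
        = Complex.exp (conj z'.1 + z.1 + (inner ℂ z'.2 z.2 : ℂ))
    rw [← Complex.exp_conj]
    congr 1
    simp only [map_add, Complex.conj_conj, inner_conj_symm]
    ring
  · intro n z c
    set d : Fin n → ℂ := fun j => c j * Complex.exp ((z j).1) with hd
    let x : Fin n → V := fun j => (z j).2
    choose q hq hq2 using fun m => gram_pow_sum x d m
    have hsum : ∀ j k : Fin n,
        Summable fun m : ℕ => conj (d j) * d k * ((m ! : ℂ)⁻¹ • (inner ℂ (x j) (x k) : ℂ) ^ m) :=
      fun j k => ((NormedSpace.expSeries_summable' (𝕂 := ℂ) (inner ℂ (x j) (x k) : ℂ)).mul_left _)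
    have e1 : ∀ j k : Fin n, Complex.exp (inner ℂ (x j) (x k) : ℂ)
        = ∑' m : ℕ, (m ! : ℂ)⁻¹ • (inner ℂ (x j) (x k) : ℂ) ^ m := by
      intro j k
      rw [Complex.exp_eq_exp_ℂ, NormedSpace.exp_eq_tsum (𝕂 := ℂ)]
    have hkey : ∀ j k : Fin n,
        conj (c j) * Complex.exp (conj (z j).1 + (z k).1 + (inner ℂ (x j) (x k) : ℂ)) * c k
          = ∑' m : ℕ, conj (d j) * d k * ((m ! : ℂ)⁻¹ • (inner ℂ (x j) (x k) : ℂ) ^ m) := by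
      intro j k
      rw [tsum_mul_left, ← e1]
      simp only [hd, Complex.exp_add, map_mul, ← Complex.exp_conj]
      ring
    have hS : (∑ j, ∑ k, conj (c j) *
          Complex.exp (conj (z j).1 + (z k).1 + (inner ℂ (x j) (x k) : ℂ)) * c k)
        = ∑' m : ℕ, ∑ j, ∑ k, conj (d j) * d k * ((m ! : ℂ)⁻¹ • (inner ℂ (x j) (x k) : ℂ) ^ m) := by
      rw [Summable.tsum_finsetSum (fun j _ => summable_sum fun k _ => hsum j k)]
      refine Finset.sum_congr rfl fun j _ => ?_
      rw [Summable.tsum_finsetSum (fun k _ => hsum j k)]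
      exact Finset.sum_congr rfl fun k _ => hkey j k
    have hterm : ∀ m : ℕ, (∑ j, ∑ k, conj (d j) * d k *
          ((m ! : ℂ)⁻¹ • (inner ℂ (x j) (x k) : ℂ) ^ m))
        = (((m ! : ℝ)⁻¹ * q m : ℝ) : ℂ) := by
      intro m
      push_cast
      rw [← hq2 m, Finset.mul_sum]
      refine Finset.sum_congr rfl fun j _ => ?_
      rw [Finset.mul_sum]
      refine Finset.sum_congr rfl fun k _ => ?_
      simp only [smul_eq_mul]
      ring
    have hsummable : Summable fun m : ℕ => (((m ! : ℝ)⁻¹ * q m : ℝ) : ℂ) := by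
      have h2 : Summable fun m : ℕ => ∑ j, ∑ k, conj (d j) * d k *
          ((m ! : ℂ)⁻¹ • (inner ℂ (x j) (x k) : ℂ) ^ m) :=
        summable_sum fun j _ => summable_sum fun k _ => hsum j k
      exact h2.congr hterm
    have hsummable' : Summable fun m : ℕ => (m ! : ℝ)⁻¹ * q m :=
      Complex.summable_ofReal.mp hsummable
    refine ⟨∑' m : ℕ, (m ! : ℝ)⁻¹ * q m,
      tsum_nonneg fun m => mul_nonneg (by positivity) (hq m), ?_⟩
    show (∑ j, ∑ k, conj (c j) *
        Complex.exp (conj (z j).1 + (z k).1 + (inner ℂ (x j) (x k) : ℂ)) * c k) = _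
    rw [hS, Complex.ofReal_tsum]
    exact tsum_congr hterm
end
end

section
/- The Möbius coherent product is a coherent product: let Z = {z : Fin 2 → ℂ | |z 0| > |z 1|}. Then for z, z' ∈ Z the complex number conj (z 0) * z' 0 - conj (z 1) * z' 1 is nonzero, and the map K defined by K z z' := (conj (z 0) * z' 0 - conj (z 1) * z' 1)⁻¹ is a coherent product on Z. -/
open scoped ComplexConjugate

noncomputable section

/-- the Möbius coherent product. On `Z = {z : Fin 2 → ℂ | |z 0| > |z 1|}`
the quantity `conj (z 0) * z' 0 - conj (z 1) * z' 1` never vanishes, and its inverse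
is a coherent product on `Z`. -/
theorem stmt_16 :
    (∀ z z' : {v : Fin 2 → ℂ // ‖v 1‖ < ‖v 0‖},
      conj (z.1 0) * z'.1 0 - conj (z.1 1) * z'.1 1 ≠ 0) ∧
    IsCoherentProduct (fun (z z' : {v : Fin 2 → ℂ // ‖v 1‖ < ‖v 0‖}) =>
      (conj (z.1 0) * z'.1 0 - conj (z.1 1) * z'.1 1)⁻¹) := by
  have key : ∀ z z' : {v : Fin 2 → ℂ // ‖v 1‖ < ‖v 0‖},
      conj (z.1 0) * z'.1 0 - conj (z.1 1) * z'.1 1 ≠ 0 := by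
    intro z z' h
    rw [sub_eq_zero] at h
    apply_fun norm at h
    rw [norm_mul, norm_mul, Complex.norm_conj, Complex.norm_conj] at h
    have := mul_lt_mul'' z.2 z'.2 (norm_nonneg _) (norm_nonneg _)
    linarith
  refine ⟨key, ?_, ?_⟩
  · intro z z'
    simp only [map_inv₀, map_sub, map_mul, Complex.conj_conj]
    congr 1
    ring
  · intro n z c
    set a : Fin n → ℂ := fun j => (z j).1 0 with ha_def
    set b : Fin n → ℂ := fun j => (z j).1 1 with hb_def
    have hab : ∀ j, ‖b j‖ < ‖a j‖ := fun j => (z j).2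
    have ha : ∀ j, a j ≠ 0 := by
      intro j h
      have := hab j
      rw [h] at this
      simp at this
      exact (norm_nonneg _).not_gt this
    set g : ℕ → Fin n → ℂ := fun m j => (b j) ^ m / (a j) ^ (m + 1) with hg_def
    set q : Fin n → Fin n → ℂ := fun j k => (conj (b j) * b k) / (conj (a j) * a k) with hq_def
    set C : Fin n → Fin n → ℂ := fun j k => (conj (a j) * a k)⁻¹ with hC_def
    have hD : ∀ j k, conj (a j) * a k ≠ 0 := fun j k =>
      mul_ne_zero (by simpa using ha j) (ha k)
    have hq : ∀ j k, ‖q j k‖ < 1 := by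
      intro j k
      rw [hq_def]
      simp only [norm_div, norm_mul, Complex.norm_conj]
      rw [div_lt_one (mul_pos (norm_pos_iff.mpr (ha j)) (norm_pos_iff.mpr (ha k)))]
      exact mul_lt_mul'' (hab j) (hab k) (norm_nonneg _) (norm_nonneg _)
    have hterm : ∀ j k m, conj (g m j) * g m k = C j k * q j k ^ m := by
      intro j k m
      simp only [hg_def, hq_def, hC_def, map_div₀, map_pow]
      field_simp
      ring
    have hsum : ∀ j k, Summable (fun m => C j k * q j k ^ m) := fun j k =>
      (summable_geometric_of_norm_lt_one (hq j k)).mul_left _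
    have htsum : ∀ j k, ∑' m, C j k * q j k ^ m =
        (conj (a j) * a k - conj (b j) * b k)⁻¹ := by
      intro j k
      rw [tsum_mul_left, tsum_geometric_of_norm_lt_one (hq j k), hC_def, ← mul_inv]
      congr 1
      rw [hq_def]
      simp only
      rw [mul_sub, mul_one, mul_div_cancel₀ _ (hD j k)]
    -- S
    set S : ℕ → ℂ := fun m => ∑ j, c j * g m j with hS_def
    have hinner : ∀ m, ∑ j, ∑ k, conj (c j) * (C j k * q j k ^ m) * c k
        = (Complex.normSq (S m) : ℂ) := by
      intro m
      rw [hS_def, Complex.normSq_eq_conj_mul_self]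
      simp only [map_sum, map_mul, Finset.sum_mul, Finset.mul_sum]
      conv_rhs => rw [Finset.sum_comm]
      refine Finset.sum_congr rfl fun j _ => Finset.sum_congr rfl fun k _ => ?_
      rw [← hterm j k m]
      ring
    have hsumF : Summable (fun m => ∑ j, ∑ k, conj (c j) * (C j k * q j k ^ m) * c k) := by
      refine summable_sum (fun j _ => summable_sum (fun k _ => ?_))
      exact ((hsum j k).mul_left _).mul_right _
    have hsumS : Summable (fun m => Complex.normSq (S m)) := by
      rw [← Complex.summable_ofReal]
      exact hsumF.congr fun m => hinner m
    refine ⟨∑' m, Complex.normSq (S m), tsum_nonneg fun m => Complex.normSq_nonneg _, ?_⟩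
    have step1 : (∑ j, ∑ k, conj (c j) * (conj (a j) * a k - conj (b j) * b k)⁻¹ * c k)
        = ∑ j, ∑ k, ∑' m, conj (c j) * (C j k * q j k ^ m) * c k := by
      refine Finset.sum_congr rfl fun j _ => Finset.sum_congr rfl fun k _ => ?_
      rw [tsum_mul_right, tsum_mul_left, htsum j k]
    calc (∑ j, ∑ k, conj (c j) * (conj ((z j).1 0) * (z k).1 0 - conj ((z j).1 1) * (z k).1 1)⁻¹ * c k)
        = ∑ j, ∑ k, ∑' m, conj (c j) * (C j k * q j k ^ m) * c k := step1
      _ = ∑' m, ∑ j, ∑ k, conj (c j) * (C j k * q j k ^ m) * c k := by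
          rw [Summable.tsum_finsetSum (fun j _ => summable_sum fun k _ => ((hsum j k).mul_left _).mul_right _)]
          exact Finset.sum_congr rfl fun j _ =>
            (Summable.tsum_finsetSum (fun k _ => ((hsum j k).mul_left _).mul_right _)).symm
      _ = ∑' m, (Complex.normSq (S m) : ℂ) := by
          exact tsum_congr fun m => hinner m
      _ = ((∑' m, Complex.normSq (S m) : ℝ) : ℂ) := (Complex.ofRealCLM.map_tsum hsumS).symm
end
end

section
/- The de Branges kernel of a de Branges function is a coherent product on the open upper half-plane: let E : ℂ → ℂ be entire, define E♯(z) := conj (E (conj z)), and assume |E♯(z)| < |E(z)| whenever Im z > 0 (i.e., E is a de Branges function). For w, z in the open upper half-plane U = {z : ℂ | 0 < Im z} define K w z := (E z * conj (E w) - E♯ z * conj (E♯ w)) / (2 * Complex.I * (conj w - z)). Then the denominator is nonzero on U × U, conj (K w z) = K z w for all w, z ∈ U, and for every n, every tuple w : Fin n → U and every c : Fin n → ℂ, the sum Σ_{j,k} conj (c j) * K (w j) (w k) * (c k) is a nonnegative real number; that is, K is a coherent product on U. -/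
open scoped ComplexConjugate

noncomputable section

/-- The conjugate-reflected function `E♯(z) = conj (E (conj z))`. -/
def eSharp (E : ℂ → ℂ) (z : ℂ) : ℂ := conj (E (conj z))

/-- The open upper half-plane. -/
def UpperHalf : Type := {z : ℂ // 0 < z.im}

/-- The de Branges kernel of an entire function `E`. -/
def deBrangesKernel (E : ℂ → ℂ) (w z : UpperHalf) : ℂ :=
  (E z.1 * conj (E w.1) - eSharp E z.1 * conj (eSharp E w.1)) /
    (2 * Complex.I * (conj w.1 - z.1))

section Aux
open Complex Metric Filter Set intervalIntegral Real Topology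

namespace Stmt17Aux

/-- `conj ∘ E ∘ conj` is entire when `E` is. -/
lemma diff_conj_conj {E : ℂ → ℂ} (hE : Differentiable ℂ E) :
    Differentiable ℂ (fun z => conj (E (conj z))) := by
  intro z
  have h := (hE (conj z)).hasDerivAt
  rw [hasDerivAt_iff_tendsto] at h
  have hc : Tendsto (fun w : ℂ => conj w) (𝓝 z) (𝓝 (conj z)) :=
    Complex.continuous_conj.tendsto z
  have h2 := h.comp hc
  have h3 : HasDerivAt (fun w => conj (E (conj w))) (conj (deriv E (conj z))) z := by
    rw [hasDerivAt_iff_tendsto]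
    refine h2.congr fun w => ?_
    simp only [Function.comp, smul_eq_mul]
    congr 1
    · rw [show (starRingEnd ℂ) w - (starRingEnd ℂ) z = conj (w - z) from (map_sub _ _ _).symm,
        RCLike.norm_conj]
    · rw [show conj (E (conj w)) - conj (E (conj z)) - (w - z) * conj (deriv E (conj z))
          = conj (E (conj w) - E (conj z) - (conj w - conj z) * deriv E (conj z)) from by
        simp only [map_sub, map_mul, Complex.conj_conj],
        RCLike.norm_conj]
  exact h3.differentiableAt

variable {n : ℕ}

/-- Finite combination of Szegő kernels. -/
def ker (μ : Fin n → ℂ) (e : Fin n → ℂ) (z : ℂ) : ℂ :=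
  ∑ k, e k * (1 - conj (μ k) * z)⁻¹

lemma one_sub_ne {a : ℂ} (ha : ‖a‖ < 1) : (1 : ℂ) - a ≠ 0 := by
  intro h
  rw [sub_eq_zero] at h
  rw [← h] at ha
  simp at ha

lemma den_ne {μ z : ℂ} (hμ : ‖μ‖ < 1) (hz : ‖z‖ < 1) :
    (1 : ℂ) - conj μ * z ≠ 0 := by
  apply one_sub_ne
  rw [norm_mul]
  have h1 : ‖conj μ‖ = ‖μ‖ := by simp
  rw [h1]
  nlinarith [norm_nonneg μ, norm_nonneg z]

lemma ker_diff (μ : Fin n → ℂ) (hμ : ∀ k, ‖μ k‖ < 1) (e : Fin n → ℂ) :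
    DifferentiableOn ℂ (ker μ e) (ball 0 1) := by
  apply DifferentiableOn.fun_sum
  intro k _
  apply DifferentiableOn.const_mul
  apply DifferentiableOn.inv
  · exact (differentiableOn_const _).sub ((differentiable_id.const_mul _).differentiableOn)
  · intro z hz
    exact den_ne (hμ k) (by simpa [mem_ball_zero_iff] using hz)

lemma circle_mem_ball {r : ℝ} (hr0 : 0 < r) (hr1 : r < 1) (θ : ℝ) :
    circleMap 0 r θ ∈ ball (0:ℂ) 1 := by
  simp only [mem_ball_zero_iff, norm_circleMap_zero]
  rw [abs_of_pos hr0]; exact hr1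

/-- Cauchy integral computation of the pairing with a single Szegő kernel on circle `r`. -/
lemma szego_single (v : ℂ → ℂ) (hv : DifferentiableOn ℂ v (ball 0 1))
    {r : ℝ} (hr0 : 0 < r) (hr1 : r < 1) {μ : ℂ} (hμ : ‖μ‖ < 1) :
    ∫ θ in (0:ℝ)..(2*π), v (circleMap 0 r θ) *
        conj ((1 - conj μ * circleMap 0 r θ)⁻¹)
      = 2 * π * v ((r:ℂ)^2 * μ) := by
  have hd : DifferentiableOn ℂ v (closedBall 0 r) :=
    hv.mono (closedBall_subset_ball hr1)
  have hw : ((r:ℂ)^2 * μ) ∈ ball (0:ℂ) r := by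
    simp only [mem_ball_zero_iff, norm_mul, norm_pow, Complex.norm_real, Real.norm_eq_abs,
      abs_of_pos hr0]
    nlinarith [norm_nonneg μ]
  have key := hd.circleIntegral_sub_inv_smul hw
  have hptwise : ∀ θ : ℝ, (circleMap 0 r θ * I) •
      ((circleMap 0 r θ - (r:ℂ)^2 * μ)⁻¹ • v (circleMap 0 r θ))
      = I * (v (circleMap 0 r θ) * conj ((1 - conj μ * circleMap 0 r θ)⁻¹)) := by
    intro θ
    set z := circleMap 0 r θ with hzdef
    have hz0 : z ≠ 0 := by
      simp only [hzdef]
      intro h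
      have := norm_circleMap_zero r θ
      rw [h] at this
      simp [abs_of_pos hr0] at this
      linarith
    have hzc : z * conj z = ((r:ℝ)^2 : ℝ) := by
      rw [Complex.mul_conj]
      norm_cast
      rw [← Complex.sq_norm]
      simp [hzdef, norm_circleMap_zero, abs_of_pos hr0]
    have hz2 : z - (r:ℂ)^2 * μ ≠ 0 := by
      intro h
      rw [sub_eq_zero] at h
      have h1 : ‖z‖ = r := by simp [hzdef, norm_circleMap_zero, abs_of_pos hr0]
      rw [h] at h1
      simp only [norm_mul, norm_pow, Complex.norm_real, Real.norm_eq_abs, abs_of_pos hr0] at h1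
      nlinarith [norm_nonneg μ]
    have hcj : conj ((1 - conj μ * z)⁻¹) = z * (z - (r:ℂ)^2 * μ)⁻¹ := by
      rw [map_inv₀, map_sub, map_one, map_mul, Complex.conj_conj]
      have h1 : (1 - μ * conj z) * z = z - (r:ℂ)^2 * μ := by
        push_cast at hzc
        linear_combination (-μ) * hzc
      have hne : 1 - μ * conj z ≠ 0 := by
        intro h
        rw [h, zero_mul] at h1
        exact hz2 h1.symm
      rw [eq_comm]
      rw [mul_inv_eq_iff_eq_mul₀ hz2, inv_mul_eq_div, eq_div_iff hne]
      push_cast at hzc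
      linear_combination (-μ) * hzc
    rw [hcj]
    simp only [smul_eq_mul]
    ring
  have e1 : (∮ z in C(0, r), (z - (r:ℂ)^2*μ)⁻¹ • v z)
      = I * ∫ θ in (0:ℝ)..(2*π), v (circleMap 0 r θ) * conj ((1 - conj μ * circleMap 0 r θ)⁻¹) := by
    rw [circleIntegral]
    simp only [deriv_circleMap]
    rw [show (fun θ : ℝ => (circleMap 0 r θ * I) •
        ((circleMap 0 r θ - (r:ℂ)^2*μ)⁻¹ • v (circleMap 0 r θ)))
        = fun θ : ℝ => I * (v (circleMap 0 r θ) * conj ((1 - conj μ * circleMap 0 r θ)⁻¹)) from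
      funext hptwise]
    rw [intervalIntegral.integral_const_mul]
  rw [e1, smul_eq_mul] at key
  apply mul_left_cancel₀ Complex.I_ne_zero
  rw [key]; ring

/-- continuity of the kernel composed with the circle map -/
lemma ker_circle_cont (μ : Fin n → ℂ) (hμ : ∀ k, ‖μ k‖ < 1) (e : Fin n → ℂ)
    {r : ℝ} (hr0 : 0 < r) (hr1 : r < 1) :
    Continuous fun θ : ℝ => ker μ e (circleMap 0 r θ) :=
  ((ker_diff μ hμ e).continuousOn).comp_continuous (continuous_circleMap 0 r)
    (circle_mem_ball hr0 hr1)

lemma fun_circle_cont {v : ℂ → ℂ} (hv : DifferentiableOn ℂ v (ball 0 1))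
    {r : ℝ} (hr0 : 0 < r) (hr1 : r < 1) :
    Continuous fun θ : ℝ => v (circleMap 0 r θ) :=
  (hv.continuousOn).comp_continuous (continuous_circleMap 0 r) (circle_mem_ball hr0 hr1)

/-- Pairing of an analytic function against a finite combination of Szegő kernels. -/
lemma szego_pair (v : ℂ → ℂ) (hv : DifferentiableOn ℂ v (ball 0 1))
    {r : ℝ} (hr0 : 0 < r) (hr1 : r < 1) (μ : Fin n → ℂ) (hμ : ∀ k, ‖μ k‖ < 1)
    (e : Fin n → ℂ) :
    ∫ θ in (0:ℝ)..(2*π), v (circleMap 0 r θ) * conj (ker μ e (circleMap 0 r θ))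
      = 2 * π * ∑ k, conj (e k) * v ((r:ℂ)^2 * μ k) := by
  have h1 : ∀ θ : ℝ, v (circleMap 0 r θ) * conj (ker μ e (circleMap 0 r θ))
      = ∑ k, conj (e k) * (v (circleMap 0 r θ) * conj ((1 - conj (μ k) * circleMap 0 r θ)⁻¹)) := by
    intro θ
    rw [ker, map_sum, Finset.mul_sum]
    refine Finset.sum_congr rfl fun k _ => ?_
    rw [map_mul]; ring
  rw [intervalIntegral.integral_congr (fun θ _ => h1 θ)]
  rw [intervalIntegral.integral_finset_sum]
  · rw [Finset.mul_sum]
    refine Finset.sum_congr rfl fun k _ => ?_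
    rw [intervalIntegral.integral_const_mul, szego_single v hv hr0 hr1 (hμ k)]
    ring
  · intro k _
    apply Continuous.intervalIntegrable
    apply Continuous.mul continuous_const
    apply Continuous.mul (fun_circle_cont hv hr0 hr1)
    apply Complex.continuous_conj.comp
    apply Continuous.inv₀
    · exact continuous_const.sub (continuous_const.mul (continuous_circleMap 0 r))
    · intro θ
      have hb := circle_mem_ball hr0 hr1 θ
      rw [mem_ball_zero_iff] at hb
      exact den_ne (hμ k) hb

/-- Pick-matrix positivity for a bounded analytic function on the disk. -/
lemma disk_pick (f : ℂ → ℂ) (hf : DifferentiableOn ℂ f (ball 0 1))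
    (hfb : ∀ z ∈ ball (0:ℂ) 1, ‖f z‖ ≤ 1)
    (μ : Fin n → ℂ) (hμ : ∀ k, ‖μ k‖ < 1) (d : Fin n → ℂ) :
    ∃ s : ℝ, 0 ≤ s ∧
      ∑ j, ∑ k, conj (d j) * d k * (1 - f (μ k) * conj (f (μ j))) *
        (1 - conj (μ j) * μ k)⁻¹ = (s : ℂ) := by
  classical
  set e1 : Fin n → ℂ := fun k => conj (d k) with he1
  set e2 : Fin n → ℂ := fun k => conj (d k * f (μ k)) with he2
  set g : ℂ → ℂ := ker μ e1 with hgdef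
  set u : ℂ → ℂ := ker μ e2 with hudef
  have hg : DifferentiableOn ℂ g (ball 0 1) := ker_diff μ hμ e1
  have hu : DifferentiableOn ℂ u (ball 0 1) := ker_diff μ hμ e2
  have hfu : DifferentiableOn ℂ (fun z => f z * u z) (ball 0 1) := hf.mul hu
  set A : ℝ → ℝ := fun r => ∫ θ in (0:ℝ)..(2*π), Complex.normSq (g (circleMap 0 r θ)) with hA
  set Cr : ℝ → ℝ := fun r => ∫ θ in (0:ℝ)..(2*π), Complex.normSq (u (circleMap 0 r θ)) with hCr
  set X : ℝ → ℂ := fun r => 2 * π * ∑ k, d k * f (μ k) * u ((r:ℂ)^2 * μ k) with hX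
  set Y : ℝ → ℂ := fun r =>
    2 * π * ∑ k, d k * (f ((r:ℂ)^2 * μ k) * u ((r:ℂ)^2 * μ k)) with hY
  set G : ℝ → ℂ := fun r => 2 * π * ∑ k, d k * g ((r:ℂ)^2 * μ k) with hG
  have hcoe1 : ∀ k, conj (e1 k) = d k := fun k => by rw [he1]; simp
  have hcoe2 : ∀ k, conj (e2 k) = d k * f (μ k) := fun k => by rw [he2]; simp
  -- the three integral identities, for 0 < r < 1
  have cA : ∀ r, 0 < r → r < 1 → (A r : ℂ) = G r := by
    intro r hr0 hr1
    rw [hA]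
    dsimp only
    rw [← intervalIntegral.integral_ofReal]
    rw [intervalIntegral.integral_congr
      (fun θ _ => (Complex.mul_conj (g (circleMap 0 r θ))).symm : EqOn _ _ _)]
    rw [szego_pair g hg hr0 hr1 μ hμ e1, hG]
    dsimp only
    congr 1
    exact Finset.sum_congr rfl fun k _ => by rw [hcoe1]
  have cC : ∀ r, 0 < r → r < 1 → (Cr r : ℂ) = X r := by
    intro r hr0 hr1
    rw [hCr]
    dsimp only
    rw [← intervalIntegral.integral_ofReal]
    rw [intervalIntegral.integral_congr
      (fun θ _ => (Complex.mul_conj (u (circleMap 0 r θ))).symm : EqOn _ _ _)]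
    rw [szego_pair u hu hr0 hr1 μ hμ e2, hX]
    dsimp only
    congr 1
    exact Finset.sum_congr rfl fun k _ => by rw [hcoe2]
  have cY : ∀ r, 0 < r → r < 1 →
      (∫ θ in (0:ℝ)..(2*π), (f (circleMap 0 r θ) * u (circleMap 0 r θ)) *
        conj (g (circleMap 0 r θ))) = Y r := by
    intro r hr0 hr1
    rw [szego_pair (fun z => f z * u z) hfu hr0 hr1 μ hμ e1, hY]
    dsimp only
    congr 1
    exact Finset.sum_congr rfl fun k _ => by rw [hcoe1]
  -- continuity facts on the circle
  have hgc : ∀ r, 0 < r → r < 1 → Continuous fun θ : ℝ => g (circleMap 0 r θ) :=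
    fun r hr0 hr1 => ker_circle_cont μ hμ e1 hr0 hr1
  have huc : ∀ r, 0 < r → r < 1 → Continuous fun θ : ℝ => u (circleMap 0 r θ) :=
    fun r hr0 hr1 => ker_circle_cont μ hμ e2 hr0 hr1
  have hfc : ∀ r, 0 < r → r < 1 → Continuous fun θ : ℝ => f (circleMap 0 r θ) :=
    fun r hr0 hr1 => fun_circle_cont hf hr0 hr1
  -- the key inequality
  have cIneq : ∀ r, 0 < r → r < 1 → Cr r ≤ ‖X r - Y r‖ + (Cr r + A r)/2 := by
    intro r hr0 hr1
    have hCre : Cr r = (X r).re := by rw [← cC r hr0 hr1]; simp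
    have step1 : (X r).re ≤ ‖X r - Y r‖ + ‖Y r‖ := by
      have : (X r).re = (X r - Y r).re + (Y r).re := by rw [Complex.sub_re]; ring
      rw [this]
      gcongr <;> exact Complex.re_le_norm _
    have step2 : ‖Y r‖ ≤ (Cr r + A r)/2 := by
      rw [← cY r hr0 hr1]
      have hnu : Continuous fun θ : ℝ => Complex.normSq (u (circleMap 0 r θ)) :=
        Complex.continuous_normSq.comp (huc r hr0 hr1)
      have hng : Continuous fun θ : ℝ => Complex.normSq (g (circleMap 0 r θ)) :=
        Complex.continuous_normSq.comp (hgc r hr0 hr1)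
      have hcont : Continuous fun θ : ℝ => (f (circleMap 0 r θ) * u (circleMap 0 r θ)) *
          conj (g (circleMap 0 r θ)) :=
        ((hfc r hr0 hr1).mul (huc r hr0 hr1)).mul (Complex.continuous_conj.comp (hgc r hr0 hr1))
      calc ‖∫ θ in (0:ℝ)..(2*π), (f (circleMap 0 r θ) * u (circleMap 0 r θ)) *
              conj (g (circleMap 0 r θ))‖
          ≤ ∫ θ in (0:ℝ)..(2*π), ‖(f (circleMap 0 r θ) * u (circleMap 0 r θ)) *
              conj (g (circleMap 0 r θ))‖ :=
            intervalIntegral.norm_integral_le_integral_norm (by positivity)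
        _ ≤ ∫ θ in (0:ℝ)..(2*π), (Complex.normSq (u (circleMap 0 r θ)) +
              Complex.normSq (g (circleMap 0 r θ)))/2 := by
            apply intervalIntegral.integral_mono_on (by positivity)
              (hcont.norm.intervalIntegrable _ _)
              (((hnu.add hng).div_const 2).intervalIntegrable _ _)
            intro θ _
            have hf1 : ‖f (circleMap 0 r θ)‖ ≤ 1 :=
              hfb _ (circle_mem_ball hr0 hr1 θ)
            simp only [norm_mul, RCLike.norm_conj, Pi.add_apply]
            rw [← Complex.sq_norm (u (circleMap 0 r θ)), ← Complex.sq_norm (g (circleMap 0 r θ))]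
            have h2 := norm_nonneg (u (circleMap 0 r θ))
            have h3 := norm_nonneg (g (circleMap 0 r θ))
            have h4 := norm_nonneg (f (circleMap 0 r θ))
            nlinarith [sq_nonneg (‖u (circleMap 0 r θ)‖ -
              ‖g (circleMap 0 r θ)‖)]
        _ = (Cr r + A r)/2 := by
            rw [intervalIntegral.integral_div]
            rw [intervalIntegral.integral_add (hnu.intervalIntegrable _ _)
              (hng.intervalIntegrable _ _)]
    calc Cr r = (X r).re := hCre
      _ ≤ ‖X r - Y r‖ + ‖Y r‖ := step1
      _ ≤ ‖X r - Y r‖ + (Cr r + A r)/2 := by linarith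
  -- limits as r → 1⁻
  set l : Filter ℝ := 𝓝[<] (1:ℝ) with hl
  have hev : ∀ᶠ r in l, r ∈ Ioo (0:ℝ) 1 :=
    Ioo_mem_nhdsLT_of_mem ⟨zero_lt_one, le_refl 1⟩
  have hconv : ∀ (v : ℂ → ℂ), DifferentiableOn ℂ v (ball 0 1) →
      ∀ k : Fin n, Tendsto (fun r : ℝ => v ((r:ℂ)^2 * μ k)) l (𝓝 (v (μ k))) := by
    intro v hv k
    have hmem : μ k ∈ ball (0:ℂ) 1 := by
      simp [mem_ball_zero_iff, hμ k]
    have hca : ContinuousAt v (μ k) :=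
      hv.continuousOn.continuousAt (isOpen_ball.mem_nhds hmem)
    have hcont : Continuous (fun r : ℝ => ((r:ℂ)^2 * μ k)) :=
      (Complex.continuous_ofReal.pow 2).mul continuous_const
    have hmap : Tendsto (fun r : ℝ => ((r:ℂ)^2 * μ k)) l (𝓝 (μ k)) := by
      have h1 : Tendsto (fun r : ℝ => ((r:ℂ)^2 * μ k)) l (𝓝 (((1:ℝ):ℂ)^2 * μ k)) :=
        (hcont.tendsto 1).mono_left nhdsWithin_le_nhds
      simpa using h1
    exact hca.tendsto.comp hmap
  set LA : ℂ := 2 * π * ∑ k, d k * g (μ k) with hLA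
  set LC : ℂ := 2 * π * ∑ k, d k * f (μ k) * u (μ k) with hLC
  have hGlim : Tendsto G l (𝓝 LA) := by
    rw [hG, hLA]
    exact Tendsto.const_mul _ (tendsto_finset_sum _ fun k _ =>
      Tendsto.const_mul _ (hconv g hg k))
  have hXlim : Tendsto X l (𝓝 LC) := by
    rw [hX, hLC]
    exact Tendsto.const_mul _ (tendsto_finset_sum _ fun k _ =>
      Tendsto.const_mul _ (hconv u hu k))
  have hYlim : Tendsto Y l (𝓝 LC) := by
    rw [hY, hLC]
    refine Tendsto.const_mul _ (tendsto_finset_sum _ fun k _ => ?_)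
    have := Tendsto.const_mul (d k) ((hconv f hf k).mul (hconv u hu k))
    simpa [mul_assoc] using this
  have hAc : Tendsto (fun r => ((A r : ℝ) : ℂ)) l (𝓝 LA) :=
    hGlim.congr' (hev.mono fun r hr => (cA r hr.1 hr.2).symm)
  have hCc : Tendsto (fun r => ((Cr r : ℝ) : ℂ)) l (𝓝 LC) :=
    hXlim.congr' (hev.mono fun r hr => (cC r hr.1 hr.2).symm)
  have hAre : Tendsto A l (𝓝 LA.re) := by
    have := (Complex.continuous_re.tendsto LA).comp hAc
    simpa only [Function.comp_def, Complex.ofReal_re] using this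
  have hCre : Tendsto Cr l (𝓝 LC.re) := by
    have := (Complex.continuous_re.tendsto LC).comp hCc
    simpa only [Function.comp_def, Complex.ofReal_re] using this
  have hLAreal : LA = ((LA.re : ℝ) : ℂ) := by
    have him : Tendsto (fun r => ((A r : ℝ) : ℂ).im) l (𝓝 LA.im) :=
      (Complex.continuous_im.tendsto LA).comp hAc
    have heq : (fun r => ((A r : ℝ) : ℂ).im) = fun _ : ℝ => (0:ℝ) := funext fun r => by simp
    rw [heq] at him
    have h0 : LA.im = 0 := tendsto_nhds_unique him tendsto_const_nhds
    exact Complex.ext (by simp) (by simp [h0])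
  have hLCreal : LC = ((LC.re : ℝ) : ℂ) := by
    have him : Tendsto (fun r => ((Cr r : ℝ) : ℂ).im) l (𝓝 LC.im) :=
      (Complex.continuous_im.tendsto LC).comp hCc
    have heq : (fun r => ((Cr r : ℝ) : ℂ).im) = fun _ : ℝ => (0:ℝ) := funext fun r => by simp
    rw [heq] at him
    have h0 : LC.im = 0 := tendsto_nhds_unique him tendsto_const_nhds
    exact Complex.ext (by simp) (by simp [h0])
  have hc0 : 0 ≤ LC.re := by
    refine ge_of_tendsto hCre (Eventually.of_forall fun r => ?_)
    rw [hCr]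
    exact intervalIntegral.integral_nonneg (by positivity) fun θ _ => Complex.normSq_nonneg _
  have hca0 : LC.re ≤ LA.re := by
    have hZ : Tendsto (fun r => ‖X r - Y r‖ + (Cr r + A r)/2) l
        (𝓝 (‖LC - LC‖ + (LC.re + LA.re)/2)) :=
      ((hXlim.sub hYlim).norm).add ((hCre.add hAre).div_const 2)
    have hle : LC.re ≤ ‖LC - LC‖ + (LC.re + LA.re)/2 := by
      refine le_of_tendsto_of_tendsto hCre hZ (hev.mono fun r hr => cIneq r hr.1 hr.2)
    simp only [sub_self, norm_zero, zero_add] at hle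
    linarith
  -- final algebraic assembly
  refine ⟨(LA.re - LC.re)/(2*π), div_nonneg (by linarith) (by positivity), ?_⟩
  have hsum : (2*π : ℂ) * (∑ j, ∑ k, conj (d j) * d k * (1 - f (μ k) * conj (f (μ j))) *
      (1 - conj (μ j) * μ k)⁻¹) = LA - LC := by
    rw [Finset.sum_comm, hLA, hLC]
    rw [show (2*π:ℂ) * ∑ k, d k * g (μ k) - (2*π:ℂ) * ∑ k, d k * f (μ k) * u (μ k)
        = (2*π:ℂ) * ∑ k, (d k * g (μ k) - d k * f (μ k) * u (μ k)) from by
      rw [Finset.sum_sub_distrib]; ring]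
    congr 1
    refine Finset.sum_congr rfl fun k _ => ?_
    rw [hgdef, hudef]
    simp only [ker, he1, he2]
    rw [Finset.mul_sum, Finset.mul_sum, ← Finset.sum_sub_distrib]
    refine Finset.sum_congr rfl fun j _ => ?_
    rw [map_mul]
    ring
  have h2pi : (2*π : ℂ) ≠ 0 := by
    simp only [ne_eq, mul_eq_zero]
    push_neg
    exact ⟨two_ne_zero, Complex.ofReal_ne_zero.mpr Real.pi_ne_zero⟩
  apply mul_left_cancel₀ h2pi
  rw [hsum, hLAreal, hLCreal]
  push_cast
  field_simp
  simp only [Complex.ofReal_re]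


end Stmt17Aux

open Stmt17Aux Complex Metric Filter Set Real Topology

set_option maxHeartbeats 1000000 in
/-- the de Branges kernel of a de Branges function is a coherent product
on the open upper half-plane. -/
theorem stmt_17 (E : ℂ → ℂ) (hE : Differentiable ℂ E)
    (hdB : ∀ z : ℂ, 0 < z.im → ‖eSharp E z‖ < ‖E z‖) :
    (∀ w z : UpperHalf, 2 * Complex.I * (conj w.1 - z.1) ≠ 0) ∧
    (∀ w z : UpperHalf, conj (deBrangesKernel E w z) = deBrangesKernel E z w) ∧
    (∀ (n : ℕ) (w : Fin n → UpperHalf) (c : Fin n → ℂ),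
      ∃ r : ℝ, 0 ≤ r ∧
        (∑ j, ∑ k, conj (c j) * deBrangesKernel E (w j) (w k) * c k) = (r : ℂ)) := by
  have hden : ∀ w z : UpperHalf, 2 * Complex.I * (conj w.1 - z.1) ≠ 0 := by
    intro w z
    refine mul_ne_zero (mul_ne_zero two_ne_zero Complex.I_ne_zero) ?_
    intro h
    have h2 : ((starRingEnd ℂ) w.1 - z.1).im = 0 := by rw [h]; simp
    rw [Complex.sub_im, Complex.conj_im] at h2
    have hw := w.2; have hz := z.2
    linarith
  refine ⟨hden, ?_, ?_⟩
  · intro w z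
    have hbz := hden z w
    have hbw := hden w z
    have hbcw : conj (2 * Complex.I * (conj w.1 - z.1)) ≠ 0 := by
      intro h
      apply hbw
      have h2 := congrArg (starRingEnd ℂ) h
      simpa using h2
    rw [deBrangesKernel, deBrangesKernel, map_div₀, div_eq_div_iff hbcw hbz]
    simp only [map_mul, map_sub, map_ofNat, Complex.conj_conj, Complex.conj_I]
    ring
  · intro n w c
    have hI : ∀ j : Fin n, ((w j).1 + Complex.I) ≠ 0 := by
      intro j h
      have h2 : ((w j).1 + Complex.I).im = 0 := by rw [h]; simp
      rw [Complex.add_im, Complex.I_im] at h2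
      have := (w j).2; linarith
    have hIc : ∀ j : Fin n, ((starRingEnd ℂ) (w j).1 - Complex.I) ≠ 0 := by
      intro j h
      have h2 : ((starRingEnd ℂ) (w j).1 - Complex.I).im = 0 := by rw [h]; simp
      rw [Complex.sub_im, Complex.conj_im, Complex.I_im] at h2
      have := (w j).2; linarith
    have hEne : ∀ z : ℂ, 0 < z.im → E z ≠ 0 := by
      intro z hz h
      have h1 := hdB z hz
      rw [h] at h1
      simp only [map_zero, norm_zero] at h1
      exact (norm_nonneg _).not_gt h1
    set μ : Fin n → ℂ := fun j => ((w j).1 - Complex.I) / ((w j).1 + Complex.I) with hμdef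
    set d : Fin n → ℂ := fun j => c j * E (w j).1 / ((w j).1 + Complex.I) with hddef
    set ψ : ℂ → ℂ := fun l => Complex.I * (1 + l) / (1 - l) with hψdef
    set f : ℂ → ℂ := fun l => eSharp E (ψ l) / E (ψ l) with hfdef
    have hμlt : ∀ j, ‖μ j‖ < 1 := by
      intro j
      rw [hμdef]
      dsimp only
      rw [norm_div, div_lt_one (norm_pos_iff.mpr (hI j))]
      have hsq : Complex.normSq ((w j).1 - Complex.I) < Complex.normSq ((w j).1 + Complex.I) := by
        simp only [Complex.normSq_apply, Complex.sub_re, Complex.sub_im, Complex.add_re,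
          Complex.add_im, Complex.I_re, Complex.I_im]
        have := (w j).2; nlinarith
      rw [Complex.norm_def, Complex.norm_def]
      exact Real.sqrt_lt_sqrt (Complex.normSq_nonneg _) hsq
    have hψim : ∀ l : ℂ, ‖l‖ < 1 → 0 < (ψ l).im := by
      intro l hl
      have hne : (1:ℂ) - l ≠ 0 := one_sub_ne hl
      have hN : 0 < Complex.normSq (1 - l) := Complex.normSq_pos.mpr hne
      have h2 : l.re * l.re + l.im * l.im < 1 := by
        have := Complex.sq_norm l
        rw [Complex.normSq_apply] at this
        nlinarith [norm_nonneg l]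
      rw [hψdef]
      dsimp only
      rw [Complex.div_im]
      rw [div_sub_div_same]
      apply div_pos _ hN
      simp only [Complex.mul_im, Complex.mul_re, Complex.I_re, Complex.I_im, Complex.add_re,
        Complex.add_im, Complex.one_re, Complex.one_im, Complex.sub_re, Complex.sub_im]
      nlinarith
    have hψball : ∀ l : ℂ, l ∈ ball (0:ℂ) 1 → 0 < (ψ l).im := by
      intro l hl
      exact hψim l (by rwa [mem_ball_zero_iff] at hl)
    have hψd : DifferentiableOn ℂ ψ (ball 0 1) := by
      rw [hψdef]
      apply DifferentiableOn.div
      · exact (differentiable_const _).differentiableOn.mul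
          ((differentiable_const _).add differentiable_id).differentiableOn
      · exact ((differentiable_const _).sub differentiable_id).differentiableOn
      · intro l hl
        exact one_sub_ne (by rwa [mem_ball_zero_iff] at hl)
    have hfd : DifferentiableOn ℂ f (ball 0 1) := by
      rw [hfdef]
      apply DifferentiableOn.div
      · exact (diff_conj_conj hE).comp_differentiableOn hψd
      · exact hE.comp_differentiableOn hψd
      · intro l hl
        exact hEne _ (hψball l hl)
    have hfb : ∀ l ∈ ball (0:ℂ) 1, ‖f l‖ ≤ 1 := by
      intro l hl
      rw [hfdef]
      dsimp only
      rw [norm_div, div_le_one (norm_pos_iff.mpr (hEne _ (hψball l hl)))]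
      exact (hdB (ψ l) (hψball l hl)).le
    have hψw : ∀ j, ψ (μ j) = (w j).1 := by
      intro j
      rw [hψdef, hμdef]
      dsimp only
      have hne : (1:ℂ) - ((w j).1 - Complex.I) / ((w j).1 + Complex.I) ≠ 0 := by
        rw [show (1:ℂ) - ((w j).1 - Complex.I) / ((w j).1 + Complex.I)
            = 2*Complex.I/((w j).1 + Complex.I) from by field_simp [hI j]; ring]
        apply div_ne_zero (mul_ne_zero two_ne_zero Complex.I_ne_zero) (hI j)
      field_simp [hI j]
      ring
    have hfμ : ∀ j, f (μ j) = eSharp E (w j).1 / E (w j).1 := by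
      intro j
      rw [hfdef]
      dsimp only
      rw [hψw j]
    have hcE : ∀ j : Fin n, (starRingEnd ℂ) (E (w j).1) ≠ 0 := by
      intro j h
      apply hEne _ (w j).2
      have h2 := congrArg (starRingEnd ℂ) h
      simpa using h2
    obtain ⟨s, hs0, hs⟩ := disk_pick f hfd hfb μ hμlt d
    refine ⟨s, hs0, ?_⟩
    rw [← hs]
    refine Finset.sum_congr rfl fun j _ => Finset.sum_congr rfl fun k _ => ?_
    have hXB : conj (μ j) * μ k * (((w k).1 + Complex.I) * (conj (w j).1 - Complex.I))
        = ((starRingEnd ℂ) (w j).1 + Complex.I) * ((w k).1 - Complex.I) := by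
      rw [hμdef]
      dsimp only
      simp only [map_div₀, map_sub, map_add, Complex.conj_I, sub_neg_eq_add, ← sub_eq_add_neg]
      rw [div_mul_div_comm, mul_comm ((w k).1 + Complex.I) ((starRingEnd ℂ) (w j).1 - Complex.I)]
      exact div_mul_cancel₀ _ (mul_ne_zero (hIc j) (hI k))
    have hcross : (1 - conj (μ j) * μ k) * (((w k).1 + Complex.I) * (conj (w j).1 - Complex.I))
        = 2 * Complex.I * (conj (w j).1 - (w k).1) := by
      rw [sub_mul, one_mul, hXB]
      ring
    have hne2 : 2 * Complex.I * (conj (w j).1 - (w k).1) ≠ 0 := hden (w j) (w k)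
    have hne1 : (1 : ℂ) - conj (μ j) * μ k ≠ 0 := by
      intro h
      rw [h, zero_mul] at hcross
      exact hne2 hcross.symm
    have hKinv : ((1 : ℂ) - conj (μ j) * μ k)⁻¹
        = (((w k).1 + Complex.I) * (conj (w j).1 - Complex.I)) /
          (2 * Complex.I * (conj (w j).1 - (w k).1)) := by
      rw [eq_div_iff hne2, ← hcross, inv_mul_cancel_left₀ hne1]
    have hdj : conj (d j) = conj (c j) * conj (E (w j).1) / (conj (w j).1 - Complex.I) := by
      rw [hddef]
      dsimp only
      rw [map_div₀, map_mul, map_add, Complex.conj_I, ← sub_eq_add_neg]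
    have hdk : d k = c k * E (w k).1 / ((w k).1 + Complex.I) := by rw [hddef]
    have hfac : (1 : ℂ) - f (μ k) * conj (f (μ j))
        = (E (w k).1 * conj (E (w j).1) - eSharp E (w k).1 * conj (eSharp E (w j).1)) /
          (E (w k).1 * conj (E (w j).1)) := by
      rw [hfμ j, hfμ k, map_div₀, div_mul_div_comm,
        one_sub_div (mul_ne_zero (hEne _ (w k).2) (hcE j))]
    have hBne : ((starRingEnd ℂ) (w j).1 - Complex.I) * ((w k).1 + Complex.I) *
        (E (w k).1 * (starRingEnd ℂ) (E (w j).1)) *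
        (2 * Complex.I * ((starRingEnd ℂ) (w j).1 - (w k).1)) ≠ 0 :=
      mul_ne_zero (mul_ne_zero (mul_ne_zero (hIc j) (hI k))
        (mul_ne_zero (hEne _ (w k).2) (hcE j))) hne2
    rw [deBrangesKernel, hdj, hdk, hfac, hKinv]
    rw [div_mul_div_comm, div_mul_div_comm, div_mul_div_comm]
    rw [← mul_div_assoc, div_mul_eq_mul_div]
    rw [div_eq_div_iff hne2 hBne]
    ring
end Aux
end
end
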